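/- arXiv:1507.00098 — 9 statements merged into one kernel-verified Lean document; each statement's English description precedes it below -/
import Mathlib

section
/- For every modulus m ≥ 1 and every integer a, the residue a^φ(m) mod m is idempotent, i.e., (a^φ(m))^2 ≡ a^φ(m) (mod m). -/
/-- `e` is an idempotent residue modulo `m`: `e^2 ≡ e (mod m)`. -/
def Idem (m : ℕ) (e : ZMod m) : Prop := e ^ 2 = e

/-- The order `|a|_m`: the least `n ≥ 1` such that `a^n` is idempotent mod `m`. -/
noncomputable def ord (m : ℕ) (a : ZMod m) : ℕ := sInf {n | 1 ≤ n ∧ Idem m (a ^ n)}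

/-- `a` is regular modulo `m`: `a^(|a|_m + 1) ≡ a (mod m)`. -/
noncomputable def Reg (m : ℕ) (a : ZMod m) : Prop := a ^ (ord m a + 1) = a

/-- `R_m^e`: the regular residues mod `m` whose idempotent power is `e`. -/
noncomputable def Rme (m : ℕ) (e : ZMod m) : Set (ZMod m) :=
  {a | Reg m a ∧ a ^ (ord m a) = e}

/-- The orbit of `a` modulo `m`: `{a^j mod m : 1 ≤ j ≤ |a|_m}`. -/
noncomputable def orb (m : ℕ) (a : ZMod m) : Finset (ZMod m) :=
  (Finset.Icc 1 (ord m a)).image (a ^ ·)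

lemma key_dvd (m : ℕ) (hm : 1 ≤ m) (a : ℤ) :
    (m : ℤ) ∣ (a ^ m.totient) ^ 2 - a ^ m.totient := by
  set t := m.totient with ht
  have htpos : 0 < t := Nat.totient_pos.mpr hm
  -- reduce to prime powers
  rw [Int.natCast_dvd]
  rw [Nat.dvd_iff_prime_pow_dvd_dvd]
  intro p k pp hpk
  have hp : p.Prime := pp
  rcases Nat.eq_zero_or_pos k with rfl | hk
  · simpa using one_dvd _
  have hφdvd : (p ^ k).totient ∣ t := Nat.totient_dvd_of_dvd hpk
  have hkφ : k ≤ (p ^ k).totient := by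
    obtain ⟨j, rfl⟩ : ∃ j, k = j + 1 := ⟨k - 1, by omega⟩
    rw [Nat.totient_prime_pow hp (Nat.succ_pos j)]
    calc j + 1 ≤ 2 ^ j * 1 := by
          simpa using Nat.lt_two_pow_self (n := j)
      _ ≤ p ^ j * (p - 1) := by
          apply Nat.mul_le_mul
          · exact Nat.pow_le_pow_left hp.two_le j
          · have := hp.two_le; omega
  have hkt : k ≤ t := le_trans hkφ (Nat.le_of_dvd htpos hφdvd)
  rw [← Int.natCast_dvd, Int.natCast_pow]
  by_cases hpa : (p : ℤ) ∣ a
  · -- p ∣ a : p^k ∣ a^t divides both terms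
    have h1 : (p : ℤ) ^ k ∣ a ^ t := by
      calc (p : ℤ) ^ k ∣ a ^ k := pow_dvd_pow_of_dvd hpa k
        _ ∣ a ^ t := pow_dvd_pow a hkt
    exact dvd_sub (h1.trans (dvd_pow_self _ two_ne_zero)) h1
  · -- p ∤ a : a^t ≡ 1 mod p^k
    have h1 : ((a : ZMod (p ^ k))) ^ (p ^ k).totient = 1 := by
      have hnd : ¬ p ∣ a.natAbs := by rwa [← Int.natCast_dvd]
      have hcop : (a.natAbs).Coprime (p ^ k) :=
        ((hp.coprime_iff_not_dvd.mpr hnd).symm.pow_right k)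
      have hu0 : IsUnit ((a.natAbs : ℕ) : ZMod (p ^ k)) :=
        (ZMod.isUnit_iff_coprime _ _).mpr hcop
      have hu : IsUnit (a : ZMod (p ^ k)) := by
        rcases Int.natAbs_eq a with h | h
        · rw [h, Int.cast_natCast]; exact hu0
        · rw [h, Int.cast_neg, Int.cast_natCast]; exact hu0.neg
      obtain ⟨u, hu⟩ := hu
      rw [← hu, ← Units.val_pow_eq_pow_val, ZMod.pow_totient u, Units.val_one]
    have h2 : ((a : ZMod (p ^ k))) ^ t = 1 := by
      obtain ⟨c, hc⟩ := hφdvd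
      rw [hc, pow_mul, h1, one_pow]
    have h3 : ((p : ℤ)) ^ k ∣ a ^ t - 1 := by
      have := (ZMod.intCast_zmod_eq_zero_iff_dvd (a ^ t - 1) (p ^ k)).mp (by push_cast [h2]; ring)
      simpa using this
    have : (a ^ t) ^ 2 - a ^ t = a ^ t * (a ^ t - 1) := by ring
    rw [this]
    exact h3.mul_left _
/-- Generalization of Euler's Theorem: for every `m ≥ 1` and every integer `a`,
`a^φ(m) mod m` is idempotent. -/
theorem euler_thm_generalization (m : ℕ) (hm : 1 ≤ m) (a : ℤ) :
    Idem m ((a : ZMod m) ^ m.totient) := by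
  have h := key_dvd m hm a
  have h0 : (((a ^ m.totient) ^ 2 - a ^ m.totient : ℤ) : ZMod m) = 0 :=
    (ZMod.intCast_zmod_eq_zero_iff_dvd _ m).mpr h
  push_cast at h0
  unfold Idem
  linear_combination h0
end

section
/- Every residue a modulo m is regular (i.e., there exists n > 1 with a^n ≡ a (mod m)) if and only if m is square-free. -/
/-- Every residue modulo `m` is regular (i.e. `a^n ≡ a (mod m)` for some `n > 1`)
iff `m` is squarefree. -/
theorem all_regular_iff_squarefree (m : ℕ) (hm : 1 ≤ m) :
    (∀ a : ZMod m, ∃ n > 1, a ^ n = a) ↔ Squarefree m := by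
  haveI : NeZero m := ⟨by omega⟩
  constructor
  · intro h
    rw [Nat.squarefree_iff_prime_squarefree]
    intro p pp hpp
    rcases pp with pp
    have hp2 : 2 ≤ p := pp.two_le
    obtain ⟨k, hk⟩ := hpp
    have hk0 : 0 < k := by
      rcases Nat.eq_zero_or_pos k with h0 | h0
      · subst h0; simp at hk; omega
      · exact h0
    obtain ⟨n, hn1, hn⟩ := h ((m / p : ℕ) : ZMod m)
    have hmp : m / p = p * k := by
      rw [hk, show p * p * k = p * (p * k) by ring,
        Nat.mul_div_cancel_left _ (by omega : 0 < p)]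
    have hsq0 : ((m / p : ℕ) : ZMod m) ^ 2 = 0 := by
      have : (m / p) ^ 2 = m * k := by rw [hmp, hk]; ring
      rw [← Nat.cast_pow, this]
      push_cast [ZMod.natCast_self]
      ring
    have hzero : ((m / p : ℕ) : ZMod m) ^ n = 0 := by
      obtain ⟨j, hj⟩ : ∃ j, n = 2 + j := ⟨n - 2, by omega⟩
      rw [hj, pow_add, hsq0, zero_mul]
    rw [hzero] at hn
    have : m ∣ m / p := by
      have := (ZMod.natCast_eq_zero_iff _ _).mp hn.symm
      exact this
    have hlt : m / p < m := Nat.div_lt_self (by omega) (by omega)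
    have hpos : 0 < m / p := by rw [hmp]; positivity
    exact absurd (Nat.le_of_dvd hpos this) (by omega)
  · intro hsq a
    refine ⟨m.totient + 1, by have := Nat.totient_pos.mpr (by omega : 0 < m); omega, ?_⟩
    set b := a.val with hb
    have hba : (b : ZMod m) = a := ZMod.natCast_val a |>.trans (ZMod.cast_id _ _)
    set n := m.totient + 1 with hn
    have hble : b ≤ b ^ n := Nat.le_self_pow (by omega) b
    have key : m ∣ b ^ n - b := by
      rw [← Nat.prod_primeFactors_of_squarefree hsq]
      refine Finset.prod_primes_dvd _ (fun p hp => (Nat.prime_of_mem_primeFactors hp).prime)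
        (fun p hp => ?_)
      have pp := Nat.prime_of_mem_primeFactors hp
      haveI : Fact p.Prime := ⟨pp⟩
      have hdvd : (p - 1) ∣ m.totient := by
        have := Nat.totient_dvd_of_dvd (Nat.dvd_of_mem_primeFactors hp)
        rwa [Nat.totient_prime pp] at this
      have : (b : ZMod p) ^ n = (b : ZMod p) := by
        by_cases hc : (b : ZMod p) = 0
        · rw [hc]; exact zero_pow (by omega)
        · obtain ⟨c, hc'⟩ := hdvd
          rw [hn, pow_succ, hc', pow_mul, ZMod.pow_card_sub_one_eq_one hc, one_pow, one_mul]
        -- done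
      have : ((b ^ n : ℕ) : ZMod p) = (b : ZMod p) := by push_cast; exact this
      rw [ZMod.natCast_eq_natCast_iff] at this
      exact (Nat.modEq_iff_dvd' hble).mp this.symm
    have : (b : ZMod m) ^ n = (b : ZMod m) := by
      have := (Nat.modEq_iff_dvd' hble).mpr key
      have := (ZMod.natCast_eq_natCast_iff _ _ _).mpr this.symm
      push_cast at this; exact this
    rwa [hba] at this
end

section
/- A residue a modulo m is regular if and only if for every prime p, p | a and p | m imply p^(v_p(m)) | a, where v_p(m) is the exponent of p in m. -/
/-- A residue `a` mod `m` is regular iff for every prime `p`, `p ∣ a` and `p ∣ m`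
imply `p^(v_p(m)) ∣ a`. -/
theorem regular_iff_prime_pow_dvd (m a : ℕ) (hm : 1 ≤ m) :
    (∃ n > 1, a ^ n ≡ a [MOD m]) ↔
      ∀ p : ℕ, p.Prime → p ∣ a → p ∣ m → p ^ (m.factorization p) ∣ a := by
  constructor
  · rintro ⟨n, hn, h⟩ p hp hpa hpm
    obtain ⟨j, rfl⟩ : ∃ j, n = j + 2 := ⟨n - 2, by omega⟩
    set k := m.factorization p with hk
    have hd : (m : ℤ) ∣ (a : ℤ) - ((a : ℤ)) ^ (j + 2) := by
      have := (Nat.ModEq.dvd h)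
      push_cast at this ⊢
      exact this
    have hpk : ((p : ℤ)) ^ k ∣ (a : ℤ) - (a : ℤ) ^ (j + 2) := by
      refine dvd_trans ?_ hd
      exact_mod_cast Nat.ordProj_dvd m p
    have hfac : (a : ℤ) - (a : ℤ) ^ (j + 2) = (a : ℤ) * (1 - (a : ℤ) ^ (j + 1)) := by ring
    have hprime : Prime ((p : ℤ)) := Nat.prime_iff_prime_int.mp hp
    have hndvd : ¬ ((p : ℤ)) ∣ (1 - (a : ℤ) ^ (j + 1)) := by
      intro hdvd
      have h1 : ((p : ℤ)) ∣ (a : ℤ) ^ (j + 1) := by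
        exact dvd_pow (Int.natCast_dvd_natCast.mpr hpa) (Nat.succ_ne_zero j)
      have : ((p : ℤ)) ∣ 1 := by
        have := dvd_add hdvd h1
        simpa using this
      exact hp.one_lt.ne' (by exact_mod_cast Int.eq_one_of_dvd_one (by positivity) this)
    have hcop : IsCoprime (((p : ℤ)) ^ k) (1 - (a : ℤ) ^ (j + 1)) :=
      IsCoprime.pow_left ((hprime.coprime_iff_not_dvd).mpr hndvd)
    have : ((p : ℤ)) ^ k ∣ (a : ℤ) := by
      rw [hfac] at hpk
      exact hcop.dvd_of_dvd_mul_right hpk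
    exact_mod_cast this
  · intro h
    refine ⟨m.totient + 1, by have := Nat.totient_pos.mpr hm; omega, ?_⟩
    set n := m.totient + 1 with hn
    have hle : a ≤ a ^ n := Nat.le_self_pow (by omega) a
    have key : ∀ p : ℕ, p.Prime → p ^ (m.factorization p) ∣ a ^ n - a := by
      intro p hp
      by_cases hpm : p ∣ m
      · set k := m.factorization p with hk
        by_cases hpa : p ∣ a
        · have h1 : p ^ k ∣ a := h p hp hpa hpm
          exact Nat.dvd_sub (h1.trans (dvd_pow_self a (by omega))) h1
        · have hcop : a.Coprime (p ^ k) :=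
            Nat.Coprime.pow_right k ((hp.coprime_iff_not_dvd.mpr hpa).symm)
          have heuler : a ^ (p ^ k).totient ≡ 1 [MOD p ^ k] := Nat.ModEq.pow_totient hcop
          obtain ⟨t, ht⟩ : (p ^ k).totient ∣ m.totient :=
            Nat.totient_dvd_of_dvd (Nat.ordProj_dvd m p)
          have h2 : a ^ m.totient ≡ 1 [MOD p ^ k] := by
            rw [ht, pow_mul]
            calc (a ^ (p ^ k).totient) ^ t ≡ 1 ^ t [MOD p ^ k] := heuler.pow t
              _ = 1 := one_pow t
          have h3 : a ^ n ≡ a [MOD p ^ k] := by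
            rw [hn, pow_succ]
            calc a ^ m.totient * a ≡ 1 * a [MOD p ^ k] := h2.mul_right a
              _ = a := one_mul a
          exact (Nat.modEq_iff_dvd' hle).mp h3.symm
      · have : m.factorization p = 0 := Nat.factorization_eq_zero_of_not_dvd hpm
        simp [this]
    have : m ∣ a ^ n - a := by
      rcases Nat.eq_zero_or_pos (a ^ n - a) with h0 | h0
      · simp [h0]
      · rw [← Nat.factorization_le_iff_dvd (by omega) (by omega)]
        intro p
        by_cases hp : p.Prime
        · exact (Nat.Prime.pow_dvd_iff_le_factorization hp (by omega)).mp (key p hp)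
        · simp [Nat.factorization_eq_zero_of_not_prime m hp]
    exact ((Nat.modEq_iff_dvd' hle).mpr this).symm
end

section
/- Let a be regular modulo m with order |a|_m (the least n ≥ 1 such that a^n is idempotent mod m). If a^k ≡ e (mod m) for some idempotent e, then |a|_m divides k. -/
/-- If `a` is regular mod `m` and `a^k` is congruent to an idempotent `e`, then
`|a|_m` divides `k`. -/
theorem ord_dvd_of_pow_idem (m : ℕ) (hm : 1 ≤ m) (a e : ZMod m) (ha : Reg m a)
    (he : Idem m e) (k : ℕ) (hk : 1 ≤ k) (h : a ^ k = e) : ord m a ∣ k := by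
  set d := ord m a with hd
  have hset : k ∈ {n | 1 ≤ n ∧ Idem m (a ^ n)} := ⟨hk, h ▸ he⟩
  have hdmem : d ∈ {n | 1 ≤ n ∧ Idem m (a ^ n)} := Nat.sInf_mem ⟨k, hset⟩
  obtain ⟨hd1, _⟩ := hdmem
  have hper : ∀ n, 1 ≤ n → a ^ (n + d) = a ^ n := by
    intro n hn
    obtain ⟨p, rfl⟩ := Nat.exists_eq_add_of_le hn
    have h1 : 1 + p + d = (d + 1) + p := by ring
    rw [h1, pow_add, ha]
    rw [pow_add, pow_one, mul_comm]
  have hmul : ∀ q n, 1 ≤ n → a ^ (n + q * d) = a ^ n := by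
    intro q
    induction q with
    | zero => simp
    | succ q ih =>
      intro n hn
      have h1 : n + (q + 1) * d = (n + d) + q * d := by ring
      rw [h1, ih (n + d) (by omega), hper n hn]
  set r := k % d with hr
  rcases Nat.eq_zero_or_pos r with h0 | h0
  · exact Nat.dvd_of_mod_eq_zero h0
  · exfalso
    have hrd : r < d := Nat.mod_lt _ (by omega)
    have hkeq : k = r + (k / d) * d := (Nat.mod_add_div' k d).symm
    have h1 : a ^ k = a ^ r := by rw [hkeq]; exact hmul _ _ h0
    have h2 : a ^ (2 * k) = a ^ (2 * r) := by
      have h2k : 2 * k = 2 * r + (2 * (k / d)) * d := by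
        conv_lhs => rw [hkeq]
        ring
      rw [h2k]
      exact hmul _ _ (by omega)
    have hidk : Idem m (a ^ k) := h ▸ he
    have hidr : Idem m (a ^ r) := by
      unfold Idem at hidk ⊢
      calc (a ^ r) ^ 2 = a ^ (r * 2) := (pow_mul a r 2).symm
        _ = a ^ (2 * r) := by rw [mul_comm]
        _ = a ^ (2 * k) := h2.symm
        _ = a ^ (k * 2) := by rw [mul_comm]
        _ = (a ^ k) ^ 2 := pow_mul a k 2
        _ = a ^ k := hidk
        _ = a ^ r := h1
    have : d ≤ r := Nat.sInf_le ⟨h0, hidr⟩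
    omega
end

section
/- If a is regular modulo m, then its order |a|_m divides φ(m). -/
/-- In a finite commutative monoid, some positive power of any element is idempotent. -/
lemma exists_idem_pow (m : ℕ) [NeZero m] (a : ZMod m) :
    ∃ n, 1 ≤ n ∧ Idem m (a ^ n) := by
  obtain ⟨i, j, hij, h⟩ := Finite.exists_ne_map_eq_of_infinite (fun k : ℕ => a ^ (k + 1))
  wlog hlt : i < j generalizing i j
  · exact this j i hij.symm h.symm (by omega)
  set s := i + 1 with hs
  set p := j - i with hp
  have hp1 : 1 ≤ p := by omega
  have hkey : a ^ s = a ^ (s + p) := by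
    simpa [hs, hp, show i + 1 + (j - i) = j + 1 by omega] using h
  have hstep : ∀ t x, s ≤ x → a ^ (x + t * p) = a ^ x := by
    intro t
    induction t with
    | zero => simp
    | succ t ih =>
      intro x hx
      have h1 : x + (t + 1) * p = (x + p) + t * p := by ring
      have h2 : a ^ (x + p) = a ^ x := by
        have hx2 : x + p = (x - s) + (s + p) := by omega
        have hx3 : x = (x - s) + s := by omega
        rw [hx2, pow_add, ← hkey, ← pow_add, ← hx3]
      rw [h1, ih (x + p) (by omega), h2]
  refine ⟨s * p, by nlinarith, ?_⟩
  unfold Idem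
  rw [← pow_mul]
  have : s * p * 2 = s * p + s * p := by ring
  rw [this, hstep s (s * p) (by nlinarith)]

/-- If `a` is regular modulo `m`, its order divides `φ(m)`. -/
theorem ord_dvd_totient (m : ℕ) (hm : 1 ≤ m) (a : ZMod m) (ha : Reg m a) :
    ord m a ∣ m.totient := by
  haveI : NeZero m := ⟨by omega⟩
  set d := ord m a with hd
  obtain ⟨hd1, hidem⟩ : 1 ≤ d ∧ Idem m (a ^ d) :=
    Nat.sInf_mem (exists_idem_pow m a)
  set e : ZMod m := a ^ d with he
  have hee : e * e = e := by
    have h := hidem; unfold Idem at h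
    calc e * e = e ^ 2 := (sq e).symm
    _ = e := h
  have hae : a * (1 - e) = 0 := by
    have : a * e = a := by
      have := ha; unfold Reg at this
      calc a * e = a ^ (d + 1) := by rw [he, pow_succ]; ring
      _ = a := this
    rw [mul_sub, this]; ring
  -- u = a + (1 - e) is a unit of order exactly d
  set u : ZMod m := a + (1 - e) with hu
  have hupow : ∀ k, 1 ≤ k → u ^ k = a ^ k + (1 - e) := by
    intro k hk
    induction k with
    | zero => omega
    | succ n ih =>
      rcases Nat.eq_or_lt_of_le hk with h1 | h1
      · simp [← h1, hu]
      · have hn : 1 ≤ n := by omega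
        rw [pow_succ, ih hn, hu]
        have h1e : (1 - e) * (1 - e) = 1 - e := by linear_combination hee
        have han : a ^ n * (1 - e) = 0 := by
          have hna : a ^ n = a ^ (n - 1) * a := by
            rw [← pow_succ, show n - 1 + 1 = n by omega]
          rw [hna, mul_assoc, hae, mul_zero]
        calc (a ^ n + (1 - e)) * (a + (1 - e))
            = a ^ n * a + a ^ n * (1 - e) + a * (1 - e) + (1 - e) * (1 - e) := by ring
          _ = a ^ (n + 1) + (1 - e) := by rw [han, hae, h1e, ← pow_succ]; ring
  have hud : u ^ d = 1 := by rw [hupow d hd1, ← he]; ring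
  have hunit : IsUnit u := by
    apply IsUnit.of_mul_eq_one (a := u) (u ^ (d - 1))
    rw [← pow_succ', show d - 1 + 1 = d by omega, hud]
  set v := hunit.unit with hv
  have hvd : v ^ d = 1 := by
    ext; push_cast [hv]; exact hud
  have hodvd : orderOf v ∣ d := orderOf_dvd_of_pow_eq_one hvd
  have hole : d ≤ orderOf v := by
    apply Nat.sInf_le
    have hpos : 0 < orderOf v := orderOf_pos v
    refine ⟨hpos, ?_⟩
    have hvk : u ^ orderOf v = 1 := by
      have := pow_orderOf_eq_one v
      calc u ^ orderOf v = ((v ^ orderOf v : (ZMod m)ˣ) : ZMod m) := by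
            push_cast [hv]; rfl
        _ = 1 := by rw [this]; rfl
    have hak : a ^ orderOf v = e := by
      have := hupow (orderOf v) hpos
      rw [hvk] at this
      linear_combination -this
    unfold Idem
    rw [hak, sq, hee]
  have hoeq : orderOf v = d :=
    le_antisymm (Nat.le_of_dvd (by omega) hodvd) hole
  rw [← hoeq, ← ZMod.card_units_eq_totient m]
  exact orderOf_dvd_card
end

section
/- If a is regular modulo m and k ≥ 1, then the order of a^k modulo m equals |a|_m / gcd(k, |a|_m). -/
-- one-step periodicity
lemma step_per {M : Type*} [Monoid M] (a : M) (i p : ℕ) (hp : a ^ (i + p) = a ^ i) :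
    ∀ n, i ≤ n → a ^ (n + p) = a ^ n := by
  intro n h
  have h1 : n + p = (n - i) + (i + p) := by omega
  have h2 : n = (n - i) + i := by omega
  rw [h1, pow_add, hp, ← pow_add, ← h2]

lemma mult_per {M : Type*} [Monoid M] (a : M) (i p : ℕ) (hp : a ^ (i + p) = a ^ i) :
    ∀ t n, i ≤ n → a ^ (n + t * p) = a ^ n := by
  intro t
  induction t with
  | zero => simp
  | succ t ih =>
    intro n h
    have : n + (t + 1) * p = (n + t * p) + p := by ring
    rw [this, step_per a i p hp _ (by omega), ih n h]

lemma idem_exists (m : ℕ) (hm : 1 ≤ m) (a : ZMod m) : ∃ n, 1 ≤ n ∧ Idem m (a ^ n) := by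
  haveI : NeZero m := ⟨by omega⟩
  obtain ⟨i, j, hij, hpow⟩ := Finite.exists_ne_map_eq_of_infinite (fun n : ℕ => a ^ n)
  wlog hlt : i < j generalizing i j
  · exact this j i hij.symm hpow.symm (by omega)
  rcases Nat.eq_zero_or_pos i with hi | hi
  · subst hi
    refine ⟨j, by omega, ?_⟩
    unfold Idem
    have h1 : a ^ j = 1 := by rw [← hpow, pow_zero]
    rw [h1]; simp
  · set p := j - i with hp
    have hij' : a ^ (i + p) = a ^ i := by
      have : i + p = j := by omega
      rw [this]; exact hpow.symm
    refine ⟨i * p, Nat.mul_pos hi (by omega), ?_⟩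
    unfold Idem
    have h2 : (a ^ (i * p)) ^ 2 = a ^ (i * p + i * p) := by rw [pow_two, ← pow_add]
    rw [h2]
    exact mult_per a i p hij' i (i * p) (Nat.le_mul_of_pos_right i (by omega))

/-- If `a` is regular mod `m` and `k ≥ 1`, then `|a^k|_m = |a|_m / gcd(k, |a|_m)`. -/
theorem ord_pow (m : ℕ) (hm : 1 ≤ m) (a : ZMod m) (ha : Reg m a) (k : ℕ)
    (hk : 1 ≤ k) : ord m (a ^ k) = ord m a / Nat.gcd k (ord m a) := by
  set d := ord m a with hd
  have hmem : d ∈ {n | 1 ≤ n ∧ Idem m (a ^ n)} := Nat.sInf_mem (idem_exists m hm a)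
  obtain ⟨hd1, hdidem⟩ := hmem
  -- periodicity
  have hstep : a ^ (1 + d) = a ^ 1 := by
    rw [pow_one, Nat.add_comm]; exact ha
  have hper : ∀ t n, 1 ≤ n → a ^ (n + t * d) = a ^ n := mult_per a 1 d hstep
  -- idempotent exponents are exactly positive multiples of d
  have hL3 : ∀ n, 1 ≤ n → d ∣ n → Idem m (a ^ n) := by
    intro n hn ⟨t, ht⟩
    unfold Idem
    have : (a ^ n) ^ 2 = a ^ (n + t * d) := by
      rw [pow_two, ← pow_add]; congr 1; rw [ht]; ring
    rw [this, hper t n hn]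
  have hL4 : ∀ n, 1 ≤ n → Idem m (a ^ n) → d ∣ n := by
    intro n hn hid
    by_contra hnd
    have hr1 : 1 ≤ n % d := by
      rcases Nat.eq_zero_or_pos (n % d) with h | h
      · exact absurd (Nat.dvd_of_mod_eq_zero h) hnd
      · omega
    have hrd : n % d < d := Nat.mod_lt n (by omega)
    have heq : a ^ n = a ^ (n % d) := by
      have hnn : n = n % d + (n / d) * d := by
        rw [Nat.mul_comm]; exact (Nat.mod_add_div n d).symm
      conv_lhs => rw [hnn]
      rw [hper (n / d) (n % d) hr1]
    have : d ≤ n % d := Nat.sInf_le ⟨hr1, by rwa [← heq]⟩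
    omega
  set g := Nat.gcd k d with hg
  have hg1 : 1 ≤ g := Nat.gcd_pos_of_pos_left d hk
  have hgk : g ∣ k := Nat.gcd_dvd_left k d
  have hgd : g ∣ d := Nat.gcd_dvd_right k d
  set d' := d / g with hd'
  have hd'1 : 1 ≤ d' := Nat.div_pos (Nat.le_of_dvd (by omega) hgd) (by omega)
  have hcop : Nat.Coprime d' (k / g) :=
    (Nat.coprime_div_gcd_div_gcd (by omega)).symm
  -- d ∣ k * n ↔ d' ∣ n
  have hiff : ∀ n, (d ∣ k * n ↔ d' ∣ n) := by
    intro n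
    constructor
    · intro h
      have hdd : d = g * d' := (Nat.mul_div_cancel' hgd).symm
      have hkk : k = g * (k / g) := (Nat.mul_div_cancel' hgk).symm
      rw [hdd, hkk, mul_assoc] at h
      have := (mul_dvd_mul_iff_left (a := g) (by omega : g ≠ 0)).mp h
      exact hcop.dvd_of_dvd_mul_left this
    · intro h
      calc d = g * d' := (Nat.mul_div_cancel' hgd).symm
        _ ∣ k * n := mul_dvd_mul hgk h
  -- compute the sInf
  have hset : ∀ n, (1 ≤ n ∧ Idem m ((a ^ k) ^ n)) ↔ (1 ≤ n ∧ d' ∣ n) := by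
    intro n
    rw [← pow_mul]
    constructor
    · rintro ⟨hn, hid⟩
      exact ⟨hn, (hiff n).mp (hL4 (k * n) (Nat.mul_pos (by omega) (by omega)) hid)⟩
    · rintro ⟨hn, hdn⟩
      exact ⟨hn, hL3 (k * n) (Nat.mul_pos (by omega) (by omega)) ((hiff n).mpr hdn)⟩
  show sInf {n | 1 ≤ n ∧ Idem m ((a ^ k) ^ n)} = d'
  have hset' : {n | 1 ≤ n ∧ Idem m ((a ^ k) ^ n)} = {n | 1 ≤ n ∧ d' ∣ n} := by
    ext n; exact hset n
  rw [hset']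
  apply le_antisymm
  · exact Nat.sInf_le ⟨hd'1, dvd_refl d'⟩
  · refine le_csInf ⟨d', hd'1, dvd_refl d'⟩ ?_
    rintro n ⟨hn, hdn⟩
    exact Nat.le_of_dvd (by omega) hdn
end

section
/- Given positive integers u, v, w with w | gcd(u,v), there exist positive integers u₁, u₂, v₁, v₂, w₁, w₂ such that u = u₁u₂, v = v₁v₂, w = w₁w₂, gcd(u,v) = u₂v₁, w₁ | v₁ | u₁, w₂ | u₂ | v₂, and gcd(u₁,u₂) = gcd(v₁,v₂) = gcd(w₁,w₂) = gcd(u₁,v₂) = gcd(u₂,v₁) = 1. -/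
def FactPred (u v w : ℕ) : Prop :=
  ∃ u₁ u₂ v₁ v₂ w₁ w₂ : ℕ,
    1 ≤ u₁ ∧ 1 ≤ u₂ ∧ 1 ≤ v₁ ∧ 1 ≤ v₂ ∧ 1 ≤ w₁ ∧ 1 ≤ w₂ ∧
    u = u₁ * u₂ ∧ v = v₁ * v₂ ∧ w = w₁ * w₂ ∧
    Nat.gcd u v = u₂ * v₁ ∧
    w₁ ∣ v₁ ∧ v₁ ∣ u₁ ∧ w₂ ∣ u₂ ∧ u₂ ∣ v₂ ∧
    Nat.gcd u₁ u₂ = 1 ∧ Nat.gcd v₁ v₂ = 1 ∧ Nat.gcd w₁ w₂ = 1 ∧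
    Nat.gcd u₁ v₂ = 1 ∧ Nat.gcd u₂ v₁ = 1

lemma FactPred.swap {u v w : ℕ} (h : FactPred u v w) : FactPred v u w := by
  obtain ⟨u₁, u₂, v₁, v₂, w₁, w₂, h1, h2, h3, h4, h5, h6, hu, hv, hw, hg,
    d1, d2, d3, d4, c1, c2, c3, c4, c5⟩ := h
  refine ⟨v₂, v₁, u₂, u₁, w₂, w₁, h4, h3, h2, h1, h6, h5, ?_, ?_, ?_, ?_,
    d3, d4, d1, d2, ?_, ?_, ?_, ?_, ?_⟩
  · rw [hv, mul_comm]
  · rw [hu, mul_comm]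
  · rw [hw, mul_comm]
  · rw [Nat.gcd_comm, hg, mul_comm]
  · rw [Nat.gcd_comm]; exact c2
  · rw [Nat.gcd_comm]; exact c1
  · rw [Nat.gcd_comm]; exact c3
  · rw [Nat.gcd_comm]; exact c4
  · rw [Nat.gcd_comm]; exact c5

/-- gcd of `p^A x'` and `p^B y'` when `B ≤ A` and `p ∤ y'`. -/
lemma gcd_aux {p A B x' y' : ℕ} (hp : p.Prime) (hBA : B ≤ A) (hpy : ¬ p ∣ y') :
    Nat.gcd (p ^ A * x') (p ^ B * y') = Nat.gcd x' y' * p ^ B := by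
  have hcop : Nat.Coprime (p ^ (A - B)) y' :=
    Nat.Coprime.pow_left _ ((Nat.Prime.coprime_iff_not_dvd hp).mpr hpy)
  have h1 : p ^ A * x' = (x' * p ^ (A - B)) * p ^ B := by
    rw [mul_assoc, ← pow_add, Nat.sub_add_cancel hBA]; ring
  rw [h1, mul_comm (p ^ B) y', Nat.gcd_mul_right,
    Nat.Coprime.gcd_mul_right_cancel _ hcop]

/-- The main step: strip a prime `p` with `v_p(v) ≤ v_p(u)`. -/
lemma fact_step {p u v w : ℕ} (hp : p.Prime) (hu : 1 ≤ u) (hv : 1 ≤ v) (hw : 1 ≤ w)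
    (hdvd : w ∣ Nat.gcd u v)
    (hba : v.factorization p ≤ u.factorization p)
    (ih : FactPred (ordCompl[p] u) (ordCompl[p] v) (ordCompl[p] w)) :
    FactPred u v w := by
  set a := u.factorization p with ha
  set b := v.factorization p with hb
  set c := w.factorization p with hc
  set u' := ordCompl[p] u with hu'def
  set v' := ordCompl[p] v with hv'def
  set w' := ordCompl[p] w with hw'def
  have hu0 : u ≠ 0 := by omega
  have hv0 : v ≠ 0 := by omega
  have hw0 : w ≠ 0 := by omega
  have hue : p ^ a * u' = u := Nat.ordProj_mul_ordCompl_eq_self u p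
  have hve : p ^ b * v' = v := Nat.ordProj_mul_ordCompl_eq_self v p
  have hwe : p ^ c * w' = w := Nat.ordProj_mul_ordCompl_eq_self w p
  have hpu' : ¬ p ∣ u' := Nat.not_dvd_ordCompl hp hu0
  have hpv' : ¬ p ∣ v' := Nat.not_dvd_ordCompl hp hv0
  have hpw' : ¬ p ∣ w' := Nat.not_dvd_ordCompl hp hw0
  -- gcd u v = gcd u' v' * p ^ b
  have hgcd : Nat.gcd u v = Nat.gcd u' v' * p ^ b := by
    calc Nat.gcd u v = Nat.gcd (p ^ a * u') (p ^ b * v') := by rw [hue, hve]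
      _ = Nat.gcd u' v' * p ^ b := gcd_aux hp hba hpv'
  have hpg : ¬ p ∣ Nat.gcd u' v' := fun h => hpu' (h.trans (Nat.gcd_dvd_left _ _))
  -- c ≤ b
  have hcb : c ≤ b := by
    have h1 : p ^ c ∣ Nat.gcd u' v' * p ^ b := (Nat.ordProj_dvd w p).trans (hdvd.trans hgcd.dvd)
    have h2 : Nat.Coprime (p ^ c) (Nat.gcd u' v') :=
      Nat.Coprime.pow_left _ ((Nat.Prime.coprime_iff_not_dvd hp).mpr hpg)
    have := (Nat.Coprime.dvd_of_dvd_mul_left h2 h1)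
    exact (Nat.pow_dvd_pow_iff_le_right hp.one_lt).mp this
  -- w' ∣ gcd u' v'
  have hw'dvd : w' ∣ Nat.gcd u' v' := by
    have h1 : w' ∣ Nat.gcd u' v' * p ^ b :=
      (Nat.ordCompl_dvd w p).trans (hdvd.trans hgcd.dvd)
    exact Nat.Coprime.dvd_of_dvd_mul_right
      (Nat.Coprime.pow_right _ (((Nat.Prime.coprime_iff_not_dvd hp).mpr hpw').symm)) h1
  obtain ⟨u₁, u₂, v₁, v₂, w₁, w₂, h1, h2, h3, h4, h5, h6, hu'e, hv'e, hw'e, hg',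
    d1, d2, d3, d4, c1, c2, c3, c4, c5⟩ := ih
  have hpu₂ : ¬ p ∣ u₂ := fun h => hpu' (h.trans ⟨u₁, by rw [hu'e, mul_comm]⟩)
  have hpv₂ : ¬ p ∣ v₂ := fun h => hpv' (h.trans ⟨v₁, by rw [hv'e, mul_comm]⟩)
  have hpw₂ : ¬ p ∣ w₂ := fun h => hpw' (h.trans ⟨w₁, by rw [hw'e, mul_comm]⟩)
  have cpu₂ : Nat.Coprime (p ^ a) u₂ :=
    Nat.Coprime.pow_left _ ((Nat.Prime.coprime_iff_not_dvd hp).mpr hpu₂)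
  have cpv₂ : Nat.Coprime (p ^ a) v₂ :=
    Nat.Coprime.pow_left _ ((Nat.Prime.coprime_iff_not_dvd hp).mpr hpv₂)
  have cpv₂b : Nat.Coprime (p ^ b) v₂ :=
    Nat.Coprime.pow_left _ ((Nat.Prime.coprime_iff_not_dvd hp).mpr hpv₂)
  have cpw₂ : Nat.Coprime (p ^ c) w₂ :=
    Nat.Coprime.pow_left _ ((Nat.Prime.coprime_iff_not_dvd hp).mpr hpw₂)
  have cu₂pb : Nat.Coprime u₂ (p ^ b) :=
    Nat.Coprime.pow_right _ (Nat.coprime_comm.mp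
      ((Nat.Prime.coprime_iff_not_dvd hp).mpr hpu₂))
  have hppos : 0 < p := hp.pos
  refine ⟨u₁ * p ^ a, u₂, v₁ * p ^ b, v₂, w₁ * p ^ c, w₂,
    Nat.one_le_iff_ne_zero.mpr (by positivity), h2,
    Nat.one_le_iff_ne_zero.mpr (by positivity), h4,
    Nat.one_le_iff_ne_zero.mpr (by positivity), h6, ?_, ?_, ?_, ?_, ?_, ?_, d3, d4,
    ?_, ?_, ?_, ?_, ?_⟩
  · rw [← hue, hu'e]; ring
  · rw [← hve, hv'e]; ring
  · rw [← hwe, hw'e]; ring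
  · rw [hgcd, hg']; ring
  · exact mul_dvd_mul d1 (pow_dvd_pow p hcb)
  · exact mul_dvd_mul d2 (pow_dvd_pow p hba)
  · exact Nat.Coprime.mul c1 cpu₂
  · exact Nat.Coprime.mul c2 cpv₂b
  · exact Nat.Coprime.mul c3 cpw₂
  · exact Nat.Coprime.mul c4 cpv₂
  · exact Nat.Coprime.mul_right c5 cu₂pb

lemma fact_all (n : ℕ) : ∀ u v w : ℕ, 1 ≤ u → 1 ≤ v → 1 ≤ w → w ∣ Nat.gcd u v →
    u * v ≤ n → FactPred u v w := by
  induction n using Nat.strong_induction_on with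
  | _ n ih =>
    intro u v w hu hv hw hdvd hle
    by_cases huv : u * v = 1
    · have hu1 : u = 1 := by
        have := Nat.le_of_dvd one_pos (Dvd.intro v huv)
        omega
      have hv1 : v = 1 := by
        have := Nat.le_of_dvd one_pos (Dvd.intro_left u huv)
        omega
      have hw1 : w = 1 := Nat.eq_one_of_dvd_one (by simpa [hu1, hv1] using hdvd)
      subst hu1; subst hv1; subst hw1
      exact ⟨1, 1, 1, 1, 1, 1, by norm_num⟩
    · obtain ⟨p, hp, hpuv⟩ := Nat.exists_prime_and_dvd huv
      have hu0 : u ≠ 0 := by omega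
      have hv0 : v ≠ 0 := by omega
      have hw0 : w ≠ 0 := by omega
      set a := u.factorization p with ha
      set b := v.factorization p with hb
      -- a + b ≥ 1
      have hab : 1 ≤ a + b := by
        rcases (Nat.Prime.dvd_mul hp).mp hpuv with h | h
        · have := (Nat.Prime.dvd_iff_one_le_factorization hp hu0).mp h; omega
        · have := (Nat.Prime.dvd_iff_one_le_factorization hp hv0).mp h; omega
      have hue : p ^ a * ordCompl[p] u = u := Nat.ordProj_mul_ordCompl_eq_self u p
      have hve : p ^ b * ordCompl[p] v = v := Nat.ordProj_mul_ordCompl_eq_self v p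
      have hu'pos : 0 < ordCompl[p] u := Nat.ordCompl_pos p hu0
      have hv'pos : 0 < ordCompl[p] v := Nat.ordCompl_pos p hv0
      have hw'pos : 0 < ordCompl[p] w := Nat.ordCompl_pos p hw0
      have hlt : ordCompl[p] u * ordCompl[p] v < n := by
        have h1 : u * v = p ^ (a + b) * (ordCompl[p] u * ordCompl[p] v) := by
          rw [pow_add]
          calc u * v = (p ^ a * ordCompl[p] u) * (p ^ b * ordCompl[p] v) := by
                rw [hue, hve]
            _ = p ^ a * p ^ b * (ordCompl[p] u * ordCompl[p] v) := by ring
        have h2 : 1 < p ^ (a + b) := Nat.one_lt_pow (by omega) hp.one_lt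
        calc ordCompl[p] u * ordCompl[p] v
            < p ^ (a + b) * (ordCompl[p] u * ordCompl[p] v) := by
              exact lt_mul_of_one_lt_left (by positivity) h2
          _ = u * v := h1.symm
          _ ≤ n := hle
      -- helper: w' divides gcd u' v' in both symmetric cases; handled inside fact_step,
      -- but we need the hypothesis w' ∣ gcd u' v' for the recursive call.
      have key : ∀ x y : ℕ, x ≠ 0 → y ≠ 0 →
          y.factorization p ≤ x.factorization p → w ∣ Nat.gcd x y →
          ordCompl[p] w ∣ Nat.gcd (ordCompl[p] x) (ordCompl[p] y) := by
        intro x y hx0 hy0 hyx hwxy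
        have hxe : p ^ x.factorization p * ordCompl[p] x = x :=
          Nat.ordProj_mul_ordCompl_eq_self x p
        have hye : p ^ y.factorization p * ordCompl[p] y = y :=
          Nat.ordProj_mul_ordCompl_eq_self y p
        have hpy' : ¬ p ∣ ordCompl[p] y := Nat.not_dvd_ordCompl hp hy0
        have hpw' : ¬ p ∣ ordCompl[p] w := Nat.not_dvd_ordCompl hp hw0
        have hgcd : Nat.gcd x y =
            Nat.gcd (ordCompl[p] x) (ordCompl[p] y) * p ^ y.factorization p := by
          calc Nat.gcd x y
              = Nat.gcd (p ^ x.factorization p * ordCompl[p] x)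
                (p ^ y.factorization p * ordCompl[p] y) := by rw [hxe, hye]
            _ = _ := gcd_aux hp hyx hpy'
        have h1 : ordCompl[p] w ∣
            Nat.gcd (ordCompl[p] x) (ordCompl[p] y) * p ^ y.factorization p :=
          (Nat.ordCompl_dvd w p).trans (hwxy.trans hgcd.dvd)
        exact Nat.Coprime.dvd_of_dvd_mul_right
          (Nat.Coprime.pow_right _ (((Nat.Prime.coprime_iff_not_dvd hp).mpr hpw').symm)) h1
      rcases le_total b a with hba | hab'
      · have hrec : FactPred (ordCompl[p] u) (ordCompl[p] v) (ordCompl[p] w) :=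
          ih _ hlt _ _ _ hu'pos hv'pos hw'pos (key u v hu0 hv0 hba hdvd) le_rfl
        exact fact_step hp hu hv hw hdvd hba hrec
      · have hdvd' : w ∣ Nat.gcd v u := Nat.gcd_comm u v ▸ hdvd
        have hrec : FactPred (ordCompl[p] v) (ordCompl[p] u) (ordCompl[p] w) :=
          ih _ (by rw [Nat.mul_comm]; exact hlt) _ _ _ hv'pos hu'pos hw'pos
            (key v u hv0 hu0 hab' hdvd') le_rfl
        exact (fact_step hp hv hu hw hdvd' hab' hrec).swap

/-- Given `w ∣ gcd(u,v)`, the numbers `u, v, w` admit a factorization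
`u = u₁u₂`, `v = v₁v₂`, `w = w₁w₂` with `gcd(u,v) = u₂v₁`, `w₁ ∣ v₁ ∣ u₁`,
`w₂ ∣ u₂ ∣ v₂`, and the stated coprimality conditions. -/
theorem factorization_lemma (u v w : ℕ) (hu : 1 ≤ u) (hv : 1 ≤ v) (hw : 1 ≤ w)
    (hdvd : w ∣ Nat.gcd u v) :
    ∃ u₁ u₂ v₁ v₂ w₁ w₂ : ℕ,
      1 ≤ u₁ ∧ 1 ≤ u₂ ∧ 1 ≤ v₁ ∧ 1 ≤ v₂ ∧ 1 ≤ w₁ ∧ 1 ≤ w₂ ∧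
      u = u₁ * u₂ ∧ v = v₁ * v₂ ∧ w = w₁ * w₂ ∧
      Nat.gcd u v = u₂ * v₁ ∧
      w₁ ∣ v₁ ∧ v₁ ∣ u₁ ∧ w₂ ∣ u₂ ∧ u₂ ∣ v₂ ∧
      Nat.gcd u₁ u₂ = 1 ∧ Nat.gcd v₁ v₂ = 1 ∧ Nat.gcd w₁ w₂ = 1 ∧
      Nat.gcd u₁ v₂ = 1 ∧ Nat.gcd u₂ v₁ = 1 :=
  fact_all (u * v) u v w hu hv hw hdvd le_rfl
end

section
/- Suppose e is idempotent mod m, a, b, c ∈ R_m^e, and a lies in both orb(b) and orb(c). Then there exists d ∈ R_m^e with a ∈ orb(d) and |d|_m = lcm(|b|_m, |c|_m). -/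
section helpers
variable {m : ℕ} {e : ZMod m}

lemma idem_pow {g : ZMod m} (hg : g * g = g) : ∀ s, 1 ≤ s → g ^ s = g := by
  intro s hs
  induction s with
  | zero => omega
  | succ r ih =>
    rcases Nat.eq_zero_or_pos r with h | h
    · simp [h]
    · rw [pow_succ, ih h, hg]

lemma pow_mul_e {x : ZMod m} (hx : x * e = x) : ∀ r, 1 ≤ r → x ^ r * e = x ^ r := by
  intro r hr
  cases r with
  | zero => omega
  | succ s => rw [pow_succ, mul_assoc, hx]

lemma pow_add_mul {x : ZMod m} (hx : x * e = x) {n : ℕ} (hxn : x ^ n = e) :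
    ∀ c s, 1 ≤ s → x ^ (s + c * n) = x ^ s := by
  intro c
  induction c with
  | zero => simp
  | succ r ih =>
    intro s hs
    have : s + (r + 1) * n = (s + r * n) + n := by ring
    rw [this, pow_add, hxn, pow_mul_e hx _ (by omega)]
    exact ih s hs

lemma pow_congr {x : ZMod m} (hx : x * e = x) {n : ℕ} (hxn : x ^ n = e)
    {s s' : ℕ} (hs : 1 ≤ s) (hs' : 1 ≤ s') (h : s ≡ s' [MOD n]) : x ^ s = x ^ s' := by
  rcases le_total s s' with hle | hle
  · obtain ⟨c, hc⟩ := (Nat.modEq_iff_dvd' hle).mp h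
    have : s' = s + c * n := by rw [Nat.mul_comm] at hc; omega
    rw [this, pow_add_mul hx hxn c s hs]
  · obtain ⟨c, hc⟩ := (Nat.modEq_iff_dvd' hle).mp h.symm
    have : s = s' + c * n := by rw [Nat.mul_comm] at hc; omega
    rw [this, pow_add_mul hx hxn c s' hs']

lemma ord_spec (he : Idem m e) {x : ZMod m} (hx : x * e = x) {s : ℕ} (hs : 1 ≤ s)
    (hxs : x ^ s = e) :
    x ∈ Rme m e ∧ 1 ≤ ord m x ∧ x ^ ord m x = e ∧
      ∀ u, 1 ≤ u → x ^ u = e → ord m x ∣ u := by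
  have hee : e * e = e := by have := he; rwa [Idem, sq] at this
  have hset : {n | 1 ≤ n ∧ Idem m (x ^ n)} = {n | 1 ≤ n ∧ x ^ n = e} := by
    ext n
    simp only [Set.mem_setOf_eq, and_congr_right_iff]
    intro hn
    constructor
    · intro hidem
      have hg : (x ^ n) * (x ^ n) = x ^ n := by
        have := hidem; rwa [Idem, sq] at this
      calc x ^ n = (x ^ n) ^ s := (idem_pow hg s hs).symm
        _ = (x ^ s) ^ n := by rw [← pow_mul, mul_comm, pow_mul]
        _ = e := by rw [hxs]; exact idem_pow hee n hn
    · intro hne; rw [Idem, hne]; exact he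
  have hord : ord m x = sInf {n | 1 ≤ n ∧ x ^ n = e} := by rw [ord, hset]
  have hne : ({n | 1 ≤ n ∧ x ^ n = e}).Nonempty := ⟨s, hs, hxs⟩
  have hmem := Nat.sInf_mem hne
  rw [← hord] at hmem
  obtain ⟨h1, h2⟩ := hmem
  have hdvd : ∀ u, 1 ≤ u → x ^ u = e → ord m x ∣ u := by
    intro u hu hue
    by_cases hr : u % ord m x = 0
    · exact Nat.dvd_of_mod_eq_zero hr
    · exfalso
      have hrlt : u % ord m x < ord m x := Nat.mod_lt u (by omega)
      have hxr : x ^ (u % ord m x) = e := by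
        rw [pow_congr hx h2 (by omega) hu (Nat.mod_modEq u (ord m x))]; exact hue
      have hle := Nat.sInf_le (show u % ord m x ∈ {n | 1 ≤ n ∧ x ^ n = e} from ⟨by omega, hxr⟩)
      rw [← hord] at hle
      omega
  refine ⟨⟨?_, h2⟩, h1, h2, hdvd⟩
  show x ^ (ord m x + 1) = x
  rw [pow_succ, h2, mul_comm, hx]

end helpers

lemma lcm_split : ∀ N n k : ℕ, n + k ≤ N → 0 < n → 0 < k →
    ∃ n' k', n' ∣ n ∧ k' ∣ k ∧ Nat.Coprime n' k' ∧ n' * k' = Nat.lcm n k := by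
  intro N
  induction N with
  | zero => intro n k h hn hk; omega
  | succ N ih =>
    intro n k hN hn hk
    by_cases hg : Nat.Coprime n k
    · exact ⟨n, k, dvd_rfl, dvd_rfl, hg, (Nat.Coprime.lcm_eq_mul hg).symm⟩
    · obtain ⟨p, hp, hpn, hpk⟩ : ∃ p, p.Prime ∧ p ∣ n ∧ p ∣ k := by
        have hg2 : Nat.gcd n k ≠ 1 := hg
        obtain ⟨p, hp, hpd⟩ := Nat.exists_prime_and_dvd hg2
        exact ⟨p, hp, hpd.trans (Nat.gcd_dvd_left _ _), hpd.trans (Nat.gcd_dvd_right _ _)⟩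
      have hp1 : 1 < p := hp.one_lt
      rcases le_total (n.factorization p) (k.factorization p) with hAB | hAB
      · -- remove the p-part of n
        set A := n.factorization p with hA
        have hApos : 0 < A := Nat.Prime.factorization_pos_of_dvd hp hn.ne' hpn
        have hproj : p ^ A * ordCompl[p] n = n := Nat.ordProj_mul_ordCompl_eq_self n p
        have hd : ordCompl[p] n ∣ n := Nat.ordCompl_dvd n p
        have hpos1 : 0 < ordCompl[p] n := Nat.ordCompl_pos p hn.ne'
        have hlt : ordCompl[p] n < n := by
          apply Nat.div_lt_self hn
          exact Nat.one_lt_pow hApos.ne' hp1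
        obtain ⟨n', k', h1, h2, h3, h4⟩ := ih (ordCompl[p] n) k (by omega) hpos1 hk
        refine ⟨n', k', h1.trans hd, h2, h3, ?_⟩
        rw [h4]
        apply Nat.dvd_antisymm
        · exact Nat.lcm_dvd (hd.trans (Nat.dvd_lcm_left n k)) (Nat.dvd_lcm_right n k)
        · apply Nat.lcm_dvd _ (Nat.dvd_lcm_right _ k)
          have hcop : Nat.Coprime (p ^ A) (ordCompl[p] n) :=
            Nat.Coprime.pow_left A (Nat.coprime_ordCompl hp hn.ne')
          have hpk' : p ^ A ∣ k :=
            (pow_dvd_pow p hAB).trans (Nat.ordProj_dvd k p)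
          have := Nat.Coprime.mul_dvd_of_dvd_of_dvd hcop
            (hpk'.trans (Nat.dvd_lcm_right _ k)) (Nat.dvd_lcm_left _ k)
          rwa [hproj] at this
      · -- remove the p-part of k
        set B := k.factorization p with hB
        have hBpos : 0 < B := Nat.Prime.factorization_pos_of_dvd hp hk.ne' hpk
        have hproj : p ^ B * ordCompl[p] k = k := Nat.ordProj_mul_ordCompl_eq_self k p
        have hd : ordCompl[p] k ∣ k := Nat.ordCompl_dvd k p
        have hpos1 : 0 < ordCompl[p] k := Nat.ordCompl_pos p hk.ne'
        have hlt : ordCompl[p] k < k := by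
          apply Nat.div_lt_self hk
          exact Nat.one_lt_pow hBpos.ne' hp1
        obtain ⟨n', k', h1, h2, h3, h4⟩ := ih n (ordCompl[p] k) (by omega) hn hpos1
        refine ⟨n', k', h1, h2.trans hd, h3, ?_⟩
        rw [h4]
        apply Nat.dvd_antisymm
        · exact Nat.lcm_dvd (Nat.dvd_lcm_left n k) (hd.trans (Nat.dvd_lcm_right n k))
        · apply Nat.lcm_dvd (Nat.dvd_lcm_left n _)
          have hcop : Nat.Coprime (p ^ B) (ordCompl[p] k) :=
            Nat.Coprime.pow_left B (Nat.coprime_ordCompl hp hk.ne')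
          have hpn' : p ^ B ∣ n :=
            (pow_dvd_pow p hAB).trans (Nat.ordProj_dvd n p)
          have := Nat.Coprime.mul_dvd_of_dvd_of_dvd hcop
            (hpn'.trans (Nat.dvd_lcm_left n _)) (Nat.dvd_lcm_right n _)
          rwa [hproj] at this
/-- If `a, b, c ∈ R_m^e` and `a ∈ orb(b) ∩ orb(c)`, then some `d ∈ R_m^e`
satisfies `a ∈ orb(d)` and `|d|_m = lcm(|b|_m, |c|_m)`. -/
theorem exists_orbit_lcm (m : ℕ) (hm : 1 ≤ m) (e : ZMod m) (he : Idem m e)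
    (a b c : ZMod m) (ha : a ∈ Rme m e) (hb : b ∈ Rme m e) (hc : c ∈ Rme m e)
    (hab : a ∈ orb m b) (hac : a ∈ orb m c) :
    ∃ d ∈ Rme m e, a ∈ orb m d ∧ ord m d = Nat.lcm (ord m b) (ord m c) := by
  classical
  obtain ⟨i, hi, hia⟩ := Finset.mem_image.mp hab
  obtain ⟨j0, hj0, hj0a⟩ := Finset.mem_image.mp hac
  rw [Finset.mem_Icc] at hi hj0
  set n := ord m b with hn
  set k := ord m c with hk
  have hn1 : 1 ≤ n := le_trans hi.1 hi.2
  have hk1 : 1 ≤ k := le_trans hj0.1 hj0.2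
  have hee : e * e = e := by have := he; rwa [Idem, sq] at this
  have hbn : b ^ n = e := hb.2
  have hck : c ^ k = e := hc.2
  have hbe : b * e = b := by rw [← hbn, mul_comm, ← pow_succ]; exact hb.1
  have hce : c * e = c := by rw [← hck, mul_comm, ← pow_succ]; exact hc.1
  have hia' : b ^ i = a := hia
  have hj0a' : c ^ j0 = a := hj0a
  have hae : a * e = a := by rw [← hia']; exact pow_mul_e hbe i hi.1
  have han : a ^ n = e := by
    rw [← hia', ← pow_mul, mul_comm, pow_mul, hbn]
    exact idem_pow hee i hi.1
  have hak : a ^ k = e := by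
    rw [← hj0a', ← pow_mul, mul_comm, pow_mul, hck]
    exact idem_pow hee j0 hj0.1
  obtain ⟨-, -, -, hbdvd⟩ := ord_spec he hbe hn1 hbn
  obtain ⟨-, -, -, hcdvd⟩ := ord_spec he hce hk1 hck
  obtain ⟨-, hat1, hat, hadvd⟩ := ord_spec he hae hn1 han
  set t := ord m a with ht
  have htn : t ∣ n := hadvd n hn1 han
  have htk : t ∣ k := hadvd k hk1 hak
  set L := Nat.lcm n k with hL
  have hLpos : 0 < L := Nat.lcm_pos (by omega) (by omega)
  obtain ⟨n', k', hn'd, hk'd, hcop, hmul⟩ := lcm_split (n + k) n k le_rfl (by omega) (by omega)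
  have hn'pos : 0 < n' := by
    rcases Nat.eq_zero_or_pos n' with h | h
    · rw [h, zero_mul] at hmul; omega
    · exact h
  have hk'pos : 0 < k' := by
    rcases Nat.eq_zero_or_pos k' with h | h
    · rw [h, mul_zero] at hmul; omega
    · exact h
  set p := n / n' with hpdef
  set q := k / k' with hqdef
  have hpn : p * n' = n := Nat.div_mul_cancel hn'd
  have hqk : q * k' = k := Nat.div_mul_cancel hk'd
  have hppos : 0 < p := by
    rcases Nat.eq_zero_or_pos p with h | h
    · rw [h, zero_mul] at hpn; omega
    · exact h
  have hqpos : 0 < q := by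
    rcases Nat.eq_zero_or_pos q with h | h
    · rw [h, zero_mul] at hqk; omega
    · exact h
  set t1 := Nat.gcd t n' with ht1def
  set t2 := Nat.gcd t k' with ht2def
  have htL : t ∣ n' * k' := by rw [hmul]; exact htn.trans (Nat.dvd_lcm_left n k)
  have ht12 : t1 * t2 = t := (Nat.gcd_mul_gcd_eq_iff_dvd_mul_of_coprime hcop).mpr htL
  have cop12 : Nat.Coprime t1 t2 :=
    Nat.Coprime.coprime_dvd_left (Nat.gcd_dvd_right t n')
      (Nat.Coprime.coprime_dvd_right (Nat.gcd_dvd_right t k') hcop)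
  have t1pos : 0 < t1 := Nat.gcd_pos_of_pos_left n' (by omega)
  have t2pos : 0 < t2 := Nat.gcd_pos_of_pos_left k' (by omega)
  -- modular inverses
  have inv : ∀ u v : ℕ, 0 < v → Nat.Coprime u v → ∃ z, 1 ≤ z ∧ u * z ≡ 1 [MOD v] := by
    intro u v hv huv
    rcases Nat.lt_or_ge 1 v with h1 | h1
    · obtain ⟨z, -, hz⟩ := Nat.exists_mul_mod_eq_one_of_coprime huv h1
      refine ⟨z, ?_, ?_⟩
      · rcases Nat.eq_zero_or_pos z with h0 | h0
        · rw [h0, mul_zero, Nat.zero_mod] at hz; omega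
        · exact h0
      · show u * z % v = 1 % v
        rw [hz, Nat.mod_eq_of_lt h1]
    · have hv1 : v = 1 := by omega
      subst hv1
      exact ⟨1, le_rfl, by simp [Nat.ModEq, Nat.mod_one]⟩
  obtain ⟨x, hx1, hx⟩ := inv t2 t1 t1pos cop12.symm
  obtain ⟨y, hy1, hy⟩ := inv t1 t2 t2pos cop12
  have hsum : t2 * x + t1 * y ≡ 1 [MOD t] := by
    rw [← ht12]
    apply (Nat.modEq_and_modEq_iff_modEq_mul cop12).mp
    constructor
    · have h0 : t1 * y ≡ 0 [MOD t1] := (Nat.modEq_zero_iff_dvd).mpr ⟨y, rfl⟩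
      have := hx.add h0
      simpa using this
    · have h0 : t2 * x ≡ 0 [MOD t2] := (Nat.modEq_zero_iff_dvd).mpr ⟨x, rfl⟩
      have := h0.add hy
      simpa using this
  set a1 := a ^ (t2 * x) with ha1def
  set a2 := a ^ (t1 * y) with ha2def
  have hexp1 : 0 < t2 * x := Nat.mul_pos t2pos hx1
  have hexp2 : 0 < t1 * y := Nat.mul_pos t1pos hy1
  have ha12 : a1 * a2 = a := by
    rw [ha1def, ha2def, ← pow_add]
    have := pow_congr hae hat (by omega) (le_refl 1) hsum
    rw [this, pow_one]
  have hamul : ∀ u, t ∣ u → 1 ≤ u → a ^ u = e := by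
    intro u hdvd hu
    obtain ⟨cc, rfl⟩ := hdvd
    have hcc : 1 ≤ cc := by
      rcases Nat.eq_zero_or_pos cc with h | h
      · subst h; omega
      · exact h
    rw [pow_mul, hat]
    exact idem_pow hee cc hcc
  have hbmul : ∀ w, n ∣ w → 1 ≤ w → b ^ w = e := by
    intro w hdvd hw
    obtain ⟨cc, rfl⟩ := hdvd
    have hcc : 1 ≤ cc := by
      rcases Nat.eq_zero_or_pos cc with h | h
      · subst h; omega
      · exact h
    rw [pow_mul, hbn]
    exact idem_pow hee cc hcc
  have hcmul : ∀ w, k ∣ w → 1 ≤ w → c ^ w = e := by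
    intro w hdvd hw
    obtain ⟨cc, rfl⟩ := hdvd
    have hcc : 1 ≤ cc := by
      rcases Nat.eq_zero_or_pos cc with h | h
      · subst h; omega
      · exact h
    rw [pow_mul, hck]
    exact idem_pow hee cc hcc
  -- a1 is a power of b^p
  have hw1 : a1 = b ^ (i * (t2 * x)) := by rw [ha1def, ← hia', ← pow_mul]
  have he1 : b ^ (i * (t2 * x) * t1) = e := by
    have : b ^ (i * (t2 * x) * t1) = a ^ (t2 * x * t1) := by
      rw [← hia', ← pow_mul]; ring_nf
    rw [this]
    exact hamul _ ⟨x, by rw [← ht12]; ring⟩ (Nat.mul_pos (Nat.mul_pos t2pos hx1) t1pos)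
  have hnw1 : n ∣ i * (t2 * x) * t1 := hbdvd _ (Nat.mul_pos (Nat.mul_pos hi.1 hexp1) t1pos) he1
  have hpw1 : p ∣ i * (t2 * x) := by
    have h1 : n ∣ i * (t2 * x) * n' :=
      dvd_trans hnw1 (Nat.mul_dvd_mul_left _ (Nat.gcd_dvd_right t n'))
    rw [← hpn] at h1
    exact (Nat.mul_dvd_mul_iff_right hn'pos).mp h1
  obtain ⟨u, hu⟩ := hpw1
  have hupos : 1 ≤ u := by
    rcases Nat.eq_zero_or_pos u with h | h
    · exfalso; rw [h, mul_zero] at hu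
      have : 0 < i * (t2 * x) := Nat.mul_pos hi.1 hexp1
      omega
    · exact h
  have ha1u : a1 = b ^ (p * u) := by rw [hw1, hu]
  -- a2 is a power of c^q
  have hw2 : a2 = c ^ (j0 * (t1 * y)) := by rw [ha2def, ← hj0a', ← pow_mul]
  have he2 : c ^ (j0 * (t1 * y) * t2) = e := by
    have : c ^ (j0 * (t1 * y) * t2) = a ^ (t1 * y * t2) := by
      rw [← hj0a', ← pow_mul]; ring_nf
    rw [this]
    exact hamul _ ⟨y, by rw [← ht12]; ring⟩ (Nat.mul_pos (Nat.mul_pos t1pos hy1) t2pos)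
  have hkw2 : k ∣ j0 * (t1 * y) * t2 := hcdvd _ (Nat.mul_pos (Nat.mul_pos hj0.1 hexp2) t2pos) he2
  have hqw2 : q ∣ j0 * (t1 * y) := by
    have h1 : k ∣ j0 * (t1 * y) * k' :=
      dvd_trans hkw2 (Nat.mul_dvd_mul_left _ (Nat.gcd_dvd_right t k'))
    rw [← hqk] at h1
    exact (Nat.mul_dvd_mul_iff_right hk'pos).mp h1
  obtain ⟨v, hv⟩ := hqw2
  have hvpos : 1 ≤ v := by
    rcases Nat.eq_zero_or_pos v with h | h
    · exfalso; rw [h, mul_zero] at hv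
      have : 0 < j0 * (t1 * y) := Nat.mul_pos hj0.1 hexp2
      omega
    · exact h
  have ha2v : a2 = c ^ (q * v) := by rw [hw2, hv]
  -- the element d
  set d := b ^ p * c ^ q with hddef
  have hde : d * e = d := by rw [hddef, mul_assoc, pow_mul_e hce q hqpos]
  have hdpow : ∀ s : ℕ, d ^ s = b ^ (p * s) * c ^ (q * s) := by
    intro s; rw [hddef, mul_pow, ← pow_mul, ← pow_mul]
  have hdL : d ^ L = e := by
    rw [hdpow]
    have h1 : b ^ (p * L) = e :=
      hbmul _ ⟨k', by rw [hL, ← hmul, ← hpn]; ring⟩ (Nat.mul_pos hppos hLpos)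
    have h2 : c ^ (q * L) = e :=
      hcmul _ ⟨n', by rw [hL, ← hmul, ← hqk]; ring⟩ (Nat.mul_pos hqpos hLpos)
    rw [h1, h2, hee]
  obtain ⟨hdR, hod1, hode, hddvd⟩ := ord_spec he hde hLpos hdL
  have hodL : ord m d ∣ L := hddvd L hLpos hdL
  -- L divides ord d
  have hbig : b ^ (p * (ord m d * k')) = e := by
    have h0 : d ^ (ord m d * k') = e := by
      rw [pow_mul, hode]; exact idem_pow hee k' hk'pos
    rw [hdpow] at h0
    have hcpart : c ^ (q * (ord m d * k')) = e :=
      hcmul _ ⟨ord m d, by rw [← hqk]; ring⟩ (Nat.mul_pos hqpos (Nat.mul_pos hod1 hk'pos))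
    rwa [hcpart, pow_mul_e hbe _ (Nat.mul_pos hppos (Nat.mul_pos hod1 hk'pos))] at h0
  have hn'od : n' ∣ ord m d := by
    have h1 : n ∣ p * (ord m d * k') := hbdvd _ (Nat.mul_pos hppos (Nat.mul_pos hod1 hk'pos)) hbig
    rw [← hpn] at h1
    have h2 : n' ∣ ord m d * k' := (Nat.mul_dvd_mul_iff_left hppos).mp (by
      have : p * n' ∣ p * (ord m d * k') := h1
      exact this)
    exact Nat.Coprime.dvd_of_dvd_mul_right hcop h2
  have hcbig : c ^ (q * (ord m d * n')) = e := by
    have h0 : d ^ (ord m d * n') = e := by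
      rw [pow_mul, hode]; exact idem_pow hee n' hn'pos
    rw [hdpow] at h0
    have hbpart : b ^ (p * (ord m d * n')) = e :=
      hbmul _ ⟨ord m d, by rw [← hpn]; ring⟩ (Nat.mul_pos hppos (Nat.mul_pos hod1 hn'pos))
    rw [hbpart] at h0
    rw [mul_comm] at h0
    rwa [pow_mul_e hce _ (Nat.mul_pos hqpos (Nat.mul_pos hod1 hn'pos))] at h0
  have hk'od : k' ∣ ord m d := by
    have h1 : k ∣ q * (ord m d * n') := hcdvd _ (Nat.mul_pos hqpos (Nat.mul_pos hod1 hn'pos)) hcbig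
    rw [← hqk] at h1
    have h2 : k' ∣ ord m d * n' := (Nat.mul_dvd_mul_iff_left hqpos).mp (by
      have : q * k' ∣ q * (ord m d * n') := h1
      exact this)
    exact Nat.Coprime.dvd_of_dvd_mul_right hcop.symm h2
  have hordd : ord m d = L := by
    apply Nat.dvd_antisymm hodL
    rw [hL, ← hmul]
    exact Nat.Coprime.mul_dvd_of_dvd_of_dvd hcop hn'od hk'od
  -- CRT exponent
  obtain ⟨J0, hJu, hJv⟩ := Nat.chineseRemainder hcop u v
  set J := J0 + n' * k' with hJdef
  have hJpos : 1 ≤ J := by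
    have := Nat.mul_pos hn'pos hk'pos; omega
  have hJu' : J ≡ u [MOD n'] := by
    have h0 : J0 + n' * k' ≡ J0 + 0 [MOD n'] :=
      Nat.ModEq.add_left J0 ((Nat.modEq_zero_iff_dvd).mpr ⟨k', rfl⟩)
    rw [add_zero] at h0
    exact h0.trans hJu
  have hJv' : J ≡ v [MOD k'] := by
    have h0 : J0 + n' * k' ≡ J0 + 0 [MOD k'] :=
      Nat.ModEq.add_left J0 ((Nat.modEq_zero_iff_dvd).mpr ⟨n', mul_comm n' k'⟩)
    rw [add_zero] at h0
    exact h0.trans hJv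
  have hbJ : b ^ (p * J) = b ^ (p * u) := by
    apply pow_congr hbe hbn (Nat.mul_pos hppos hJpos) (Nat.mul_pos hppos hupos)
    rw [← hpn]
    exact Nat.ModEq.mul_left' p hJu'
  have hcJ : c ^ (q * J) = c ^ (q * v) := by
    apply pow_congr hce hck (Nat.mul_pos hqpos hJpos) (Nat.mul_pos hqpos hvpos)
    rw [← hqk]
    exact Nat.ModEq.mul_left' q hJv'
  have hdJ : d ^ J = a := by
    rw [hdpow, hbJ, hcJ, ← ha1u, ← ha2v, ha12]
  -- reduce the exponent into [1, L]
  have hdj : ∃ j, 1 ≤ j ∧ j ≤ L ∧ d ^ j = a := by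
    by_cases hr : J % L = 0
    · refine ⟨L, hLpos, le_rfl, ?_⟩
      rw [← hdJ]
      exact pow_congr hde hdL hLpos hJpos (show L % L = J % L by rw [Nat.mod_self, hr])
    · refine ⟨J % L, by omega, le_of_lt (Nat.mod_lt _ hLpos), ?_⟩
      rw [← hdJ]
      exact pow_congr hde hdL (by omega) hJpos (Nat.mod_modEq J L)
  obtain ⟨j, hj1, hjL, hdja⟩ := hdj
  refine ⟨d, hdR, ?_, hordd⟩
  apply Finset.mem_image.mpr
  refine ⟨j, Finset.mem_Icc.mpr ⟨hj1, ?_⟩, hdja⟩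
  rw [hordd]
  exact hjL
end

section
/- Let m ≥ 1, a regular mod m, k ≥ 1, and define ω_m(a) = max{|b|_m : b regular mod m and b^i ≡ a (mod m) for some i ≥ 1}. Then the congruence x^k ≡ a (mod m) has a solution x if and only if a^(ω_m(a)/gcd(k, ω_m(a))) is idempotent modulo m. -/
/-- `ω_m(a)`: the largest order `|b|_m` over regular `b` with `a` a power of `b`. -/
noncomputable def omegaOrd (m : ℕ) (a : ZMod m) : ℕ :=
  sSup {n | ∃ b : ZMod m, (∃ j > 1, b ^ j = b) ∧ (∃ i ≥ 1, b ^ i = a) ∧ ord m b = n}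

namespace EulerGen
lemma idem_pow {e : ZMod m} (he : Idem m e) : ∀ n, 1 ≤ n → e ^ n = e := by
  intro n hn
  induction n with
  | zero => omega
  | succ j ih =>
    rcases Nat.eq_or_lt_of_le hn with h | h
    · simp [← h]
    · have hj : 1 ≤ j := by omega
      rw [pow_succ, ih hj]
      have := he
      unfold Idem at this
      calc e * e = e ^ 2 := by ring
        _ = e := this

lemma idem_pow_unique {b : ZMod m} {n n' : ℕ} (hn : 1 ≤ n) (hn' : 1 ≤ n')
    (h : Idem m (b ^ n)) (h' : Idem m (b ^ n')) : b ^ n = b ^ n' := by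
  have e1 : b ^ (n * n') = b ^ n := by rw [pow_mul]; exact idem_pow h n' hn'
  have e2 : b ^ (n * n') = b ^ n' := by rw [mul_comm, pow_mul]; exact idem_pow h' n hn
  rw [← e1, e2]

lemma reg_spec {b : ZMod m} (hb : ∃ n > 1, b ^ n = b) :
    1 ≤ ord m b ∧ Idem m (b ^ ord m b) ∧ b ^ (ord m b + 1) = b := by
  obtain ⟨n, hn, hbn⟩ := hb
  set d := n - 1 with hd
  have hd1 : 1 ≤ d := by omega
  have hbd : b ^ (d + 1) = b := by rw [show d + 1 = n by omega]; exact hbn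
  have hidem : Idem m (b ^ d) := by
    unfold Idem
    rw [← pow_mul]
    have : d * 2 = (d - 1) + (d + 1) := by omega
    rw [this, pow_add, hbd, ← pow_succ]
    congr 1; omega
  have hmem : ord m b ∈ {n | 1 ≤ n ∧ Idem m (b ^ n)} :=
    Nat.sInf_mem ⟨d, hd1, hidem⟩
  obtain ⟨h1, h2⟩ := hmem
  refine ⟨h1, h2, ?_⟩
  have := idem_pow_unique h1 hd1 h2 hidem
  rw [pow_succ, this, ← pow_succ, hbd]

/-- Period lemma: for `b` with `b^(t+1) = b`, exponents ≥ 1 are periodic with period t. -/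
lemma pow_period {b : ZMod m} {t : ℕ} (hb : b ^ (t + 1) = b) {i : ℕ} (hi : 1 ≤ i) :
    b ^ (i + t) = b ^ i := by
  obtain ⟨j, rfl⟩ : ∃ j, i = j + 1 := ⟨i - 1, by omega⟩
  rw [show j + 1 + t = j + (t + 1) by omega, pow_add, hb, ← pow_succ]

def IdemPt (m : ℕ) := {e : ZMod m // e * e = e}

abbrev Gp {m : ℕ} (E : IdemPt m) := {x : ZMod m // x * E.1 = x ∧ ∃ y, y * E.1 = y ∧ x * y = E.1}

variable {m : ℕ} {E : IdemPt m}

noncomputable instance : CommGroup (Gp E) where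
  mul x y := ⟨x.1 * y.1, by
      rw [mul_assoc, y.2.1], by
      obtain ⟨yx, hyx1, hyx2⟩ := x.2.2
      obtain ⟨yy, hyy1, hyy2⟩ := y.2.2
      exact ⟨yx * yy, by rw [mul_assoc, hyy1], by
        calc x.1 * y.1 * (yx * yy) = (x.1 * yx) * (y.1 * yy) := by ring
          _ = E.1 * E.1 := by rw [hyx2, hyy2]
          _ = E.1 := E.2⟩⟩
  one := ⟨E.1, E.2, ⟨E.1, E.2, E.2⟩⟩
  inv x := ⟨Classical.choose x.2.2, (Classical.choose_spec x.2.2).1, by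
      refine ⟨x.1 * E.1, by rw [mul_assoc, E.2], ?_⟩
      calc Classical.choose x.2.2 * (x.1 * E.1)
          = (x.1 * Classical.choose x.2.2) * E.1 := by ring
        _ = E.1 * E.1 := by rw [(Classical.choose_spec x.2.2).2]
        _ = E.1 := E.2⟩
  mul_assoc x y z := Subtype.ext (mul_assoc x.1 y.1 z.1)
  mul_comm x y := Subtype.ext (mul_comm x.1 y.1)
  one_mul x := Subtype.ext (by show E.1 * x.1 = x.1; rw [mul_comm]; exact x.2.1)
  mul_one x := Subtype.ext x.2.1
  inv_mul_cancel x := Subtype.ext (by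
    show Classical.choose x.2.2 * x.1 = E.1
    rw [mul_comm]; exact (Classical.choose_spec x.2.2).2)

@[simp] lemma Gp.val_mul (x y : Gp E) : (x * y).1 = x.1 * y.1 := rfl
@[simp] lemma Gp.val_one : (1 : Gp E).1 = E.1 := rfl

lemma Gp.val_pow (x : Gp E) (n : ℕ) (hn : 1 ≤ n) : (x ^ n).1 = x.1 ^ n := by
  induction n with
  | zero => omega
  | succ j ih =>
    rcases Nat.eq_or_lt_of_le hn with h | h
    · simp [← h]
    · rw [pow_succ, pow_succ, Gp.val_mul, ih (by omega)]

noncomputable instance [NeZero m] : Fintype (Gp E) := by unfold Gp; infer_instance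


lemma mem_Gp {b : ZMod m} (hb : ∃ n > 1, b ^ n = b) (hE : b ^ ord m b = E.1) :
    b * E.1 = b ∧ ∃ y, y * E.1 = y ∧ b * y = E.1 := by
  obtain ⟨h1, h2, h3⟩ := reg_spec hb
  set t := ord m b with ht
  constructor
  · rw [← hE, ← pow_succ']; exact h3
  · refine ⟨b ^ (2 * t - 1), ?_, ?_⟩
    · rw [← hE, ← pow_add]
      exact pow_period h3 (by omega)
    · rw [← hE, ← pow_succ']
      have : (2 * t - 1) + 1 = t * 2 := by omega
      rw [this, pow_mul]
      exact idem_pow h2 2 (by omega)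

lemma ord_eq_orderOf [NeZero m] {b : ZMod m} (hb : ∃ n > 1, b ^ n = b)
    (hE : b ^ ord m b = E.1) : ord m b = orderOf (⟨b, mem_Gp hb hE⟩ : Gp E) := by
  obtain ⟨h1, h2, h3⟩ := reg_spec hb
  set t := ord m b with ht
  set x : Gp E := ⟨b, mem_Gp hb hE⟩ with hx
  have hxt : x ^ t = 1 := by
    apply Subtype.ext
    rw [Gp.val_pow x t h1, Gp.val_one]
    exact hE
  have hdvd : orderOf x ∣ t := orderOf_dvd_iff_pow_eq_one.mpr hxt
  have hNpos : 0 < orderOf x := orderOf_pos x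
  have hxN : b ^ orderOf x = E.1 := by
    have h := congrArg Subtype.val (pow_orderOf_eq_one x)
    rwa [Gp.val_pow x _ hNpos, Gp.val_one] at h
  have hIdem : Idem m (b ^ orderOf x) := by
    rw [hxN]; show E.1 ^ 2 = E.1; rw [sq]; exact E.2
  have hle : t ≤ orderOf x := Nat.sInf_le ⟨hNpos, hIdem⟩
  exact le_antisymm hle (Nat.le_of_dvd h1 hdvd)

lemma gp_val_spec [NeZero m] (x : Gp E) :
    (∃ n > 1, x.1 ^ n = x.1) ∧ x.1 ^ ord m x.1 = E.1 ∧ ord m x.1 = orderOf x := by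
  have hNpos : 0 < orderOf x := orderOf_pos x
  have hxN : x.1 ^ orderOf x = E.1 := by
    have h := congrArg Subtype.val (pow_orderOf_eq_one x)
    rwa [Gp.val_pow x _ hNpos, Gp.val_one] at h
  have hreg : ∃ n > 1, x.1 ^ n = x.1 := by
    refine ⟨orderOf x + 1, by omega, ?_⟩
    rw [pow_succ, hxN, mul_comm]
    exact x.2.1
  obtain ⟨h1, h2, h3⟩ := reg_spec hreg
  have hEq : x.1 ^ ord m x.1 = E.1 := by
    rw [idem_pow_unique h1 hNpos h2
      (by rw [hxN]; show E.1 ^ 2 = E.1; rw [sq]; exact E.2), hxN]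
  refine ⟨hreg, hEq, ?_⟩
  have h := ord_eq_orderOf hreg hEq
  have hxx : (⟨x.1, mem_Gp hreg hEq⟩ : Gp E) = x := Subtype.ext rfl
  rwa [hxx] at h

variable {G : Type*} [CommGroup G] [Finite G]

lemma cyc_mem (x : G) {A : ℕ} (hA : A ∣ orderOf x) (hA0 : A ≠ 0) (z : G)
    (hz : ∃ j : ℤ, x ^ j = z) (hzA : z ^ (A : ℤ) = 1) :
    ∃ γ : ℤ, (x ^ (orderOf x / A)) ^ γ = z := by
  obtain ⟨j, rfl⟩ := hz
  rw [← zpow_mul] at hzA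
  have hdvd : (orderOf x : ℤ) ∣ j * A := orderOf_dvd_iff_zpow_eq_one.mpr hzA
  have hsA : (orderOf x : ℤ) = (orderOf x / A : ℕ) * A := by
    exact_mod_cast (Nat.div_mul_cancel hA).symm
  rw [hsA] at hdvd
  have h2 : ((orderOf x / A : ℕ) : ℤ) ∣ j :=
    (mul_dvd_mul_iff_right (by exact_mod_cast hA0 : (A : ℤ) ≠ 0)).mp hdvd
  obtain ⟨γ, hγ⟩ := h2
  refine ⟨γ, ?_⟩
  rw [← zpow_natCast x (orderOf x / A), ← zpow_mul, ← hγ]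

lemma key_dvd (a g x : G) (i k : ℕ) (hi : 1 ≤ i) (hk : 1 ≤ k)
    (hg : g ^ i = a) (hx : x ^ k = a)
    (hmax : ∀ h : G, (∃ j, 1 ≤ j ∧ h ^ j = a) → orderOf h ≤ orderOf g) :
    orderOf x ∣ orderOf g := by
  have hs0 : orderOf x ≠ 0 := (orderOf_pos x).ne'
  have hω0 : orderOf g ≠ 0 := (orderOf_pos g).ne'
  rw [← Nat.factorization_le_iff_dvd hs0 hω0, Finsupp.le_def]
  intro p
  by_contra hcon
  push_neg at hcon
  have hvs0 : 0 < (orderOf x).factorization p := by omega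
  have pp : p.Prime := by
    by_contra hnp
    rw [Nat.factorization_eq_zero_of_not_prime (orderOf x) hnp] at hvs0
    omega
  have hAs : p ^ (orderOf x).factorization p ∣ orderOf x := Nat.ordProj_dvd _ p
  have hA0 : p ^ (orderOf x).factorization p ≠ 0 := pow_ne_zero _ pp.pos.ne'
  have hBω : orderOf g / p ^ (orderOf g).factorization p ∣ orderOf g := Nat.ordCompl_dvd _ p
  have hB0 : orderOf g / p ^ (orderOf g).factorization p ≠ 0 := (Nat.ordCompl_pos p hω0).ne'
  -- u has order A := p ^ v_p(s), w has order B := ordCompl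
  have hordu : orderOf (x ^ (orderOf x / p ^ (orderOf x).factorization p))
      = p ^ (orderOf x).factorization p := by
    rw [orderOf_pow' x (Nat.ordCompl_pos p hs0).ne',
      Nat.gcd_eq_right (Nat.ordCompl_dvd _ p), Nat.div_div_self hAs hs0]
  have hordw : orderOf (g ^ (p ^ (orderOf g).factorization p))
      = orderOf g / p ^ (orderOf g).factorization p := by
    rw [orderOf_pow' g (pow_ne_zero _ pp.pos.ne'),
      Nat.gcd_eq_right (Nat.ordProj_dvd _ p)]
  have hcop : Nat.Coprime (p ^ (orderOf x).factorization p)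
      (orderOf g / p ^ (orderOf g).factorization p) :=
    Nat.Coprime.pow_left _ ((pp.coprime_iff_not_dvd).mpr (Nat.not_dvd_ordCompl pp hω0))
  have hordh : orderOf ((x ^ (orderOf x / p ^ (orderOf x).factorization p))
        * (g ^ (p ^ (orderOf g).factorization p)))
      = p ^ (orderOf x).factorization p
        * (orderOf g / p ^ (orderOf g).factorization p) := by
    rw [(Commute.all _ _).orderOf_mul_eq_mul_orderOf_of_coprime
      (by rw [hordu, hordw]; exact hcop), hordu, hordw]
  have hgt : orderOf g < p ^ (orderOf x).factorization p
      * (orderOf g / p ^ (orderOf g).factorization p) := by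
    conv_lhs => rw [← Nat.ordProj_mul_ordCompl_eq_self (orderOf g) p]
    exact (Nat.mul_lt_mul_right (Nat.ordCompl_pos p hω0)).mpr
      (Nat.pow_lt_pow_right pp.one_lt hcon)
  -- decompose a into its p-part z2' and p'-part z1'
  have hN0 : orderOf a ≠ 0 := (orderOf_pos a).ne'
  have hNs : orderOf a ∣ orderOf x := by rw [← hx]; exact orderOf_pow_dvd k
  have hNω : orderOf a ∣ orderOf g := by rw [← hg]; exact orderOf_pow_dvd i
  have hPQ : p ^ (orderOf a).factorization p
      * (orderOf a / p ^ (orderOf a).factorization p) = orderOf a :=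
    Nat.ordProj_mul_ordCompl_eq_self _ p
  obtain ⟨α, β, hαβ⟩ : IsCoprime ((p ^ (orderOf a).factorization p : ℕ) : ℤ)
      ((orderOf a / p ^ (orderOf a).factorization p : ℕ) : ℤ) :=
    Nat.isCoprime_iff_coprime.mpr
      (Nat.Coprime.pow_left _ ((pp.coprime_iff_not_dvd).mpr (Nat.not_dvd_ordCompl pp hN0)))
  have ha12 : a ^ (α * (p ^ (orderOf a).factorization p : ℕ) : ℤ)
      * a ^ (β * (orderOf a / p ^ (orderOf a).factorization p : ℕ) : ℤ) = a := by
    rw [← zpow_add]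
    have h1 : α * ((p ^ (orderOf a).factorization p : ℕ) : ℤ)
        + β * ((orderOf a / p ^ (orderOf a).factorization p : ℕ) : ℤ) = 1 := hαβ
    rw [h1, zpow_one]
  -- z1 := a ^ (β * Q) is a power of u
  have hPA : p ^ (orderOf a).factorization p ∣ p ^ (orderOf x).factorization p :=
    pow_dvd_pow p ((Nat.factorization_le_iff_dvd hN0 hs0).mpr hNs p)
  have hz1A : (a ^ (β * (orderOf a / p ^ (orderOf a).factorization p : ℕ) : ℤ))
      ^ ((p ^ (orderOf x).factorization p : ℕ) : ℤ) = 1 := by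
    rw [← zpow_mul, ← orderOf_dvd_iff_zpow_eq_one]
    have hnat : orderOf a ∣ (orderOf a / p ^ (orderOf a).factorization p)
        * p ^ (orderOf x).factorization p := by
      calc orderOf a = p ^ (orderOf a).factorization p
            * (orderOf a / p ^ (orderOf a).factorization p) := hPQ.symm
        _ ∣ p ^ (orderOf x).factorization p
            * (orderOf a / p ^ (orderOf a).factorization p) :=
          Nat.mul_dvd_mul_right hPA _
        _ = (orderOf a / p ^ (orderOf a).factorization p)
            * p ^ (orderOf x).factorization p := mul_comm _ _
    have hint : ((orderOf a : ℕ) : ℤ) ∣ ((orderOf a / p ^ (orderOf a).factorization p : ℕ) : ℤ)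
        * ((p ^ (orderOf x).factorization p : ℕ) : ℤ) := by exact_mod_cast hnat
    exact (hint.mul_left β).trans (dvd_of_eq (by ring))
  have hz1x : ∃ j : ℤ, x ^ j = a ^ (β * (orderOf a / p ^ (orderOf a).factorization p : ℕ) : ℤ) := by
    refine ⟨(k : ℤ) * (β * (orderOf a / p ^ (orderOf a).factorization p : ℕ)), ?_⟩
    rw [← hx, ← zpow_natCast x k, ← zpow_mul]
  obtain ⟨γ, hγ⟩ := cyc_mem x hAs hA0 _ hz1x hz1A
  -- z2 := a ^ (α * P) is a power of w
  have hQB : orderOf a / p ^ (orderOf a).factorization p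
      ∣ orderOf g / p ^ (orderOf g).factorization p :=
    Nat.ordCompl_dvd_ordCompl_of_dvd hNω p
  have hz2B : (a ^ (α * (p ^ (orderOf a).factorization p : ℕ) : ℤ))
      ^ ((orderOf g / p ^ (orderOf g).factorization p : ℕ) : ℤ) = 1 := by
    rw [← zpow_mul, ← orderOf_dvd_iff_zpow_eq_one]
    have hnat : orderOf a ∣ p ^ (orderOf a).factorization p
        * (orderOf g / p ^ (orderOf g).factorization p) := by
      calc orderOf a = p ^ (orderOf a).factorization p
            * (orderOf a / p ^ (orderOf a).factorization p) := hPQ.symm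
        _ ∣ p ^ (orderOf a).factorization p
            * (orderOf g / p ^ (orderOf g).factorization p) :=
          Nat.mul_dvd_mul_left _ hQB
    have hint : ((orderOf a : ℕ) : ℤ) ∣ ((p ^ (orderOf a).factorization p : ℕ) : ℤ)
        * ((orderOf g / p ^ (orderOf g).factorization p : ℕ) : ℤ) := by exact_mod_cast hnat
    exact (hint.mul_left α).trans (dvd_of_eq (by ring))
  have hz2g : ∃ j : ℤ, g ^ j = a ^ (α * (p ^ (orderOf a).factorization p : ℕ) : ℤ) := by
    refine ⟨(i : ℤ) * (α * (p ^ (orderOf a).factorization p : ℕ)), ?_⟩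
    rw [← hg, ← zpow_natCast g i, ← zpow_mul]
  obtain ⟨δ, hδ⟩ := cyc_mem g hBω hB0 _ hz2g hz2B
  rw [Nat.div_div_self (Nat.ordProj_dvd _ p) hω0] at hδ
  -- combine u^γ * w^δ = a into a single power of h := u * w via CRT
  obtain ⟨μ, ν, hμν⟩ : IsCoprime ((p ^ (orderOf x).factorization p : ℕ) : ℤ)
      ((orderOf g / p ^ (orderOf g).factorization p : ℕ) : ℤ) :=
    Nat.isCoprime_iff_coprime.mpr hcop
  set c : ℤ := γ * (ν * (orderOf g / p ^ (orderOf g).factorization p : ℕ))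
      + δ * (μ * (p ^ (orderOf x).factorization p : ℕ)) with hc
  have huc : (x ^ (orderOf x / p ^ (orderOf x).factorization p)) ^ c
      = (x ^ (orderOf x / p ^ (orderOf x).factorization p)) ^ γ := by
    have hdvd : ((p ^ (orderOf x).factorization p : ℕ) : ℤ) ∣ c - γ :=
      ⟨μ * (δ - γ), by rw [hc]; linear_combination γ * hμν⟩
    rw [← hordu] at hdvd
    calc (x ^ (orderOf x / p ^ (orderOf x).factorization p)) ^ c
        = (x ^ (orderOf x / p ^ (orderOf x).factorization p)) ^ (γ + (c - γ)) := by
          congr 1; ring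
      _ = _ * _ ^ (c - γ) := zpow_add _ γ (c - γ)
      _ = _ := by rw [orderOf_dvd_iff_zpow_eq_one.mp hdvd, mul_one]
  have hwc : (g ^ (p ^ (orderOf g).factorization p)) ^ c
      = (g ^ (p ^ (orderOf g).factorization p)) ^ δ := by
    have hdvd : ((orderOf g / p ^ (orderOf g).factorization p : ℕ) : ℤ) ∣ c - δ :=
      ⟨ν * (γ - δ), by rw [hc]; linear_combination δ * hμν⟩
    rw [← hordw] at hdvd
    calc (g ^ (p ^ (orderOf g).factorization p)) ^ c
        = (g ^ (p ^ (orderOf g).factorization p)) ^ (δ + (c - δ)) := by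
          congr 1; ring
      _ = _ * _ ^ (c - δ) := zpow_add _ δ (c - δ)
      _ = _ := by rw [orderOf_dvd_iff_zpow_eq_one.mp hdvd, mul_one]
  have hhc : ((x ^ (orderOf x / p ^ (orderOf x).factorization p))
      * (g ^ (p ^ (orderOf g).factorization p))) ^ c = a := by
    rw [mul_zpow, huc, hwc, hγ, hδ, mul_comm, ha12]
  -- convert to a natural exponent ≥ 1
  set h := (x ^ (orderOf x / p ^ (orderOf x).factorization p))
      * (g ^ (p ^ (orderOf g).factorization p)) with hh
  set M := p ^ (orderOf x).factorization p
      * (orderOf g / p ^ (orderOf g).factorization p) with hM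
  have hM0 : (0 : ℤ) < (M : ℤ) := by
    have : M ≠ 0 := by
      rw [hM]; exact Nat.mul_ne_zero hA0 hB0
    positivity
  have hMord : orderOf h = M := hordh
  have hcM : h ^ ((c % (M : ℤ)).toNat + M) = a := by
    have h1 : h ^ (((c % (M : ℤ)).toNat + M : ℕ) : ℤ) = h ^ (c % (M : ℤ) + M) := by
      congr 1
      push_cast [Int.toNat_of_nonneg (Int.emod_nonneg c hM0.ne')]
      ring
    have h2 : h ^ (c % (M : ℤ) + M) = h ^ c := by
      have hdvd : ((orderOf h : ℕ) : ℤ) ∣ (c % (M : ℤ) + M) - c := by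
        rw [hMord]
        have := Int.mul_ediv_add_emod c (M : ℤ)
        exact ⟨1 - c / M, by linarith⟩
      calc h ^ (c % (M : ℤ) + M) = h ^ (c + ((c % (M : ℤ) + M) - c)) := by congr 1; ring
        _ = h ^ c * h ^ ((c % (M : ℤ) + M) - c) := zpow_add _ _ _
        _ = h ^ c := by rw [orderOf_dvd_iff_zpow_eq_one.mp hdvd, mul_one]
    rw [← zpow_natCast h, h1, h2, hhc]
  have hbound := hmax h ⟨(c % (M : ℤ)).toNat + M, by
    have : M ≠ 0 := by rw [hM]; exact Nat.mul_ne_zero hA0 hB0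
    omega, hcM⟩
  rw [hMord] at hbound
  omega

end EulerGen

open EulerGen in
/-- Generalization of Euler's Criterion: for `a` regular mod `m` and `k ≥ 1`,
`x^k ≡ a (mod m)` is solvable iff `a^(ω_m(a)/gcd(k, ω_m(a)))` is idempotent. -/
theorem euler_criterion_generalization (m : ℕ) (hm : 1 ≤ m) (a : ZMod m)
    (ha : ∃ n > 1, a ^ n = a) (k : ℕ) (hk : 1 ≤ k) :
    (∃ x : ZMod m, x ^ k = a) ↔
      Idem m (a ^ (omegaOrd m a / Nat.gcd k (omegaOrd m a))) := by
  haveI : NeZero m := ⟨by omega⟩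
  obtain ⟨hta1, hta2, hta3⟩ := reg_spec ha
  set E : IdemPt m := ⟨a ^ ord m a, by have := hta2; rwa [Idem, sq] at this⟩ with hEdef
  have hEa : a ^ ord m a = E.1 := rfl
  set A : Gp E := ⟨a, mem_Gp ha hEa⟩ with hAdef
  have hIdemE : Idem m E.1 := by rw [Idem, sq]; exact E.2
  -- identification of the candidate set with its group-theoretic counterpart
  have hSet : {n | ∃ b : ZMod m, (∃ j > 1, b ^ j = b) ∧ (∃ i ≥ 1, b ^ i = a) ∧ ord m b = n}
      = {n | ∃ x : Gp E, (∃ i ≥ 1, x ^ i = A) ∧ orderOf x = n} := by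
    ext n
    constructor
    · rintro ⟨b, hbreg, ⟨i, hi, hbi⟩, hbord⟩
      obtain ⟨hb1, hb2, hb3⟩ := reg_spec hbreg
      have hEb : b ^ ord m b = E.1 := by
        have h2' : Idem m (b ^ (i * ord m a)) := by
          rw [pow_mul, hbi]; exact hta2
        have := idem_pow_unique hb1 (Nat.mul_pos hi hta1) hb2 h2'
        rw [this, pow_mul, hbi]
      refine ⟨⟨b, mem_Gp hbreg hEb⟩, ⟨i, hi, ?_⟩, ?_⟩
      · apply Subtype.ext
        rw [Gp.val_pow _ i hi]
        exact hbi
      · rw [← ord_eq_orderOf hbreg hEb, hbord]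
    · rintro ⟨x, ⟨i, hi, hxi⟩, hxord⟩
      obtain ⟨hreg, hEx, hordx⟩ := gp_val_spec x
      refine ⟨x.1, ?_, ⟨i, hi, ?_⟩, by rw [hordx, hxord]⟩
      · obtain ⟨nn, hnn, hnn2⟩ := hreg
        exact ⟨nn, hnn, hnn2⟩
      · have := congrArg Subtype.val hxi
        rwa [Gp.val_pow x i hi] at this
  -- basic facts about the sup
  have hta_mem : ord m a ∈
      {n | ∃ b : ZMod m, (∃ j > 1, b ^ j = b) ∧ (∃ i ≥ 1, b ^ i = a) ∧ ord m b = n} :=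
    ⟨a, ⟨ord m a + 1, by omega, hta3⟩, ⟨1, le_refl 1, pow_one a⟩, rfl⟩
  have hbdd : BddAbove
      {n | ∃ b : ZMod m, (∃ j > 1, b ^ j = b) ∧ (∃ i ≥ 1, b ^ i = a) ∧ ord m b = n} := by
    rw [hSet]
    refine ⟨Fintype.card (Gp E), ?_⟩
    rintro n ⟨x, _, rfl⟩
    exact orderOf_le_card_univ
  set ω := omegaOrd m a with hωdef
  have hωmem : ω ∈ {n | ∃ x : Gp E, (∃ i ≥ 1, x ^ i = A) ∧ orderOf x = n} := by
    rw [← hSet]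
    exact Nat.sSup_mem ⟨ord m a, hta_mem⟩ hbdd
  obtain ⟨g, ⟨i, hi, hgi⟩, hgord⟩ := hωmem
  have hmax : ∀ h : Gp E, (∃ j, 1 ≤ j ∧ h ^ j = A) → orderOf h ≤ orderOf g := by
    intro h ⟨j, hj, hhj⟩
    rw [hgord]
    exact le_csSup hbdd (by rw [hSet]; exact ⟨h, ⟨j, hj, hhj⟩, rfl⟩)
  have hω1 : 1 ≤ ω := le_trans hta1 (le_csSup hbdd hta_mem)
  set d := Nat.gcd k ω with hd
  have hd1 : 1 ≤ d := Nat.gcd_pos_of_pos_left ω (by omega)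
  have hdω : d ∣ ω := Nat.gcd_dvd_right k ω
  set q := ω / d with hq
  have hq1 : 1 ≤ q := Nat.div_pos (Nat.le_of_dvd (by omega) hdω) (by omega)
  have hdq : d * q = ω := Nat.mul_div_cancel' hdω
  -- RHS translation
  have hRHS : Idem m (a ^ q) ↔ A ^ q = 1 := by
    constructor
    · intro hIdem
      apply Subtype.ext
      rw [Gp.val_pow A q hq1, Gp.val_one]
      show a ^ q = E.1
      rw [← hEa]
      exact idem_pow_unique hq1 hta1 hIdem hta2
    · intro hpow
      have := congrArg Subtype.val hpow
      rw [Gp.val_pow A q hq1, Gp.val_one] at this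
      show (a ^ q) ^ 2 = a ^ q
      rw [this, sq]; exact E.2
  -- LHS translation
  have hLHS : (∃ x : ZMod m, x ^ k = a) ↔ (∃ X : Gp E, X ^ k = A) := by
    constructor
    · rintro ⟨x, hxk⟩
      have heE : E.1 * E.1 = E.1 := E.2
      have hx'k : (E.1 * x) ^ k = a := by
        rw [mul_pow, idem_pow hIdemE k hk, hxk, ← hEa, ← pow_succ, hta3]
      have hmem1 : (E.1 * x) * E.1 = E.1 * x := by
        rw [mul_assoc, mul_comm x E.1, ← mul_assoc, heE]
      have hmem2 : ∃ y, y * E.1 = y ∧ (E.1 * x) * y = E.1 := by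
        refine ⟨(E.1 * x) ^ (k - 1) * a ^ (2 * ord m a - 1), ?_, ?_⟩
        · rw [mul_assoc, ← hEa, ← pow_add, pow_period hta3 (by omega)]
        · rw [← mul_assoc, ← pow_succ', show k - 1 + 1 = k by omega, hx'k,
            ← pow_succ', show 2 * ord m a - 1 + 1 = ord m a * 2 by omega, pow_mul, ← hEa]
          exact idem_pow hta2 2 (by omega)
      refine ⟨⟨E.1 * x, hmem1, hmem2⟩, ?_⟩
      apply Subtype.ext
      rw [Gp.val_pow _ k hk]
      exact hx'k
    · rintro ⟨X, hXk⟩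
      refine ⟨X.1, ?_⟩
      have := congrArg Subtype.val hXk
      rwa [Gp.val_pow X k hk] at this
  rw [hLHS, hRHS]
  -- the group-theoretic core
  constructor
  · rintro ⟨X, hXk⟩
    have hsω : orderOf X ∣ ω := by
      rw [← hgord]
      exact key_dvd A g X i k hi hk hgi hXk hmax
    have hωlcm : ω ∣ k * q := by
      have : k * q = Nat.lcm k ω := by
        rw [Nat.lcm, ← hd, hq, Nat.mul_div_assoc k hdω]
      rw [this]
      exact Nat.dvd_lcm_right k ω
    rw [← hXk, ← pow_mul]
    exact orderOf_dvd_iff_pow_eq_one.mp (hsω.trans hωlcm)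
  · intro hAq
    have hgiq : g ^ (i * q) = 1 := by rw [pow_mul, hgi, hAq]
    have hωiq : ω ∣ i * q := by
      rw [← hgord]
      exact orderOf_dvd_iff_pow_eq_one.mpr hgiq
    have hdi : d ∣ i := by
      rw [← hdq] at hωiq
      exact (Nat.mul_dvd_mul_iff_right (by omega : 0 < q)).mp hωiq
    obtain ⟨c, hc⟩ := hdi
    -- Bezout
    have hbez : (d : ℤ) = k * Nat.gcdA k ω + ω * Nat.gcdB k ω := Nat.gcd_eq_gcd_ab k ω
    refine ⟨g ^ (Nat.gcdA k ω * c), ?_⟩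
    have hgω : g ^ ((ω : ℤ) * (Nat.gcdB k ω * c)) = 1 := by
      rw [← orderOf_dvd_iff_zpow_eq_one, hgord]
      exact Dvd.intro _ rfl
    calc (g ^ (Nat.gcdA k ω * c)) ^ k
        = g ^ (Nat.gcdA k ω * c * k) := by rw [← zpow_natCast (g ^ _) k, ← zpow_mul]
      _ = g ^ ((i : ℤ)) * g ^ (-((ω : ℤ) * (Nat.gcdB k ω * c))) := by
          rw [← zpow_add]
          congr 1
          have hci : (i : ℤ) = d * c := by exact_mod_cast hc
          rw [hci, hbez]; ring
      _ = g ^ ((i : ℤ)) := by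
          rw [zpow_neg, hgω, inv_one, mul_one]
      _ = A := by rw [zpow_natCast, hgi]
end
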